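/- arXiv:1411.5659 — 3 statements merged into one kernel-verified Lean document; each statement's English description precedes it below -/
import Mathlib

section
/- (Van der Corput lemma) For every integer k ≥ 2 there exists a constant c_k > 0, depending only on k, such that for all real numbers a < b, every k-times continuously differentiable function ψ : [a, b] → ℝ with |ψ^{(k)}(ξ)| ≥ 1 for all ξ ∈ [a, b], and every λ > 0, one has |∫_a^b e^{iλψ(ξ)} dξ| ≤ c_k λ^{-1/k}; the constant c_k is independent of a, b, ψ and λ. -/
open Real MeasureTheory Set

lemma hdw_ofReal {f f' : ℝ → ℝ} {s : Set ℝ} {x : ℝ} (h : HasDerivWithinAt f (f' x) s x) :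
    HasDerivWithinAt (fun y => ((f y : ℝ) : ℂ)) ((f' x : ℝ) : ℂ) s x := by
  exact HasDerivWithinAt.ofReal_comp h

lemma norm_osc (L t : ℝ) : ‖Complex.exp (Complex.I * L * (t : ℂ))‖ = 1 := by
  rw [Complex.norm_exp]; simp

lemma lemA (a b L μ : ℝ) (hab : a ≤ b) (hL : 0 < L) (hμ : 0 < μ)
    (ψ ψ' ψ'' : ℝ → ℝ)
    (hd1 : ∀ x ∈ Icc a b, HasDerivWithinAt ψ (ψ' x) (Icc a b) x)
    (hd2 : ∀ x ∈ Icc a b, HasDerivWithinAt ψ' (ψ'' x) (Icc a b) x)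
    (hc2 : ContinuousOn ψ'' (Icc a b))
    (hsgn : (∀ x ∈ Icc a b, 0 ≤ ψ'' x) ∨ (∀ x ∈ Icc a b, ψ'' x ≤ 0))
    (hsame : (∀ x ∈ Icc a b, μ ≤ ψ' x) ∨ (∀ x ∈ Icc a b, ψ' x ≤ -μ)) :
    ‖∫ ξ in a..b, Complex.exp (Complex.I * L * (ψ ξ : ℂ))‖ ≤ 3 / (L * μ) := by
  have hμψ : ∀ x ∈ Icc a b, μ ≤ |ψ' x| := by
    intro x hx
    rcases hsame with h | h
    · exact le_trans (h x hx) (le_abs_self _)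
    · rw [abs_of_nonpos (by linarith [h x hx])]; linarith [h x hx]
  have hne : ∀ x ∈ Icc a b, ψ' x ≠ 0 := fun x hx => by
    intro h0; have := hμψ x hx; rw [h0] at this; simp at this; linarith
  have hcne : ∀ x ∈ Icc a b, Complex.I * L * (ψ' x : ℂ) ≠ 0 := fun x hx => by
    simp [Complex.I_ne_zero, Complex.ext_iff, hne x hx, ne_of_gt hL]
  set s := Icc a b with hs
  have hψ'c : ContinuousOn ψ' s := fun x hx => (hd2 x hx).continuousWithinAt
  set F : ℝ → ℂ := fun x => Complex.exp (Complex.I * L * (ψ x : ℂ)) with hF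
  set g : ℝ → ℂ := fun x => (Complex.I * L * (ψ' x : ℂ))⁻¹ with hgdef
  have hFd : ∀ x ∈ s, HasDerivWithinAt F (Complex.I * L * (ψ' x : ℂ) * F x) s x := by
    intro x hx
    have := ((hdw_ofReal (hd1 x hx)).const_mul (Complex.I * L)).cexp
    simpa [hF, mul_comm] using this
  have hgd : ∀ x ∈ s, HasDerivWithinAt g
      (-(Complex.I * L * (ψ'' x : ℂ)) / (Complex.I * L * (ψ' x : ℂ)) ^ 2) s x := by
    intro x hx
    have h5 : HasDerivWithinAt (fun y => Complex.I * L * (ψ' y : ℂ))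
        (Complex.I * L * (ψ'' x : ℂ)) s x := (hdw_ofReal (hd2 x hx)).const_mul (Complex.I * L)
    have h6 := ((hasDerivAt_inv (hcne x hx)).hasFDerivAt.restrictScalars ℝ).comp_hasDerivWithinAt x h5
    convert h6 using 1
    case e'_9 =>
      show _ = (Complex.I * ↑L * ↑(ψ'' x)) • (-((Complex.I * ↑L * ↑(ψ' x)) ^ 2)⁻¹)
      rw [smul_eq_mul]; ring
    all_goals rfl
  -- FTC on F * g
  have hHd : ∀ x ∈ s, HasDerivWithinAt (fun y => F y * g y)
      (Complex.I * L * (ψ' x : ℂ) * F x * g x +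
        F x * (-(Complex.I * L * (ψ'' x : ℂ)) / (Complex.I * L * (ψ' x : ℂ)) ^ 2)) s x :=
    fun x hx => (hFd x hx).mul (hgd x hx)
  have hFc : ContinuousOn F s := fun x hx => (hFd x hx).continuousWithinAt
  have hgc : ContinuousOn g s := by
    apply ContinuousOn.inv₀
    · exact (continuous_const.continuousOn).mul (Complex.continuous_ofReal.comp_continuousOn hψ'c)
    · exact hcne
  have hψ''cc : ContinuousOn (fun x => ((ψ'' x : ℝ) : ℂ)) s :=
    Complex.continuous_ofReal.comp_continuousOn hc2
  have hintFg' : ContinuousOn (fun x => F x *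
      (-(Complex.I * L * (ψ'' x : ℂ)) / (Complex.I * L * (ψ' x : ℂ)) ^ 2)) s := by
    apply hFc.mul
    apply ContinuousOn.div
    · exact ((continuous_const.continuousOn).mul hψ''cc).neg
    · exact (((continuous_const.continuousOn).mul
        (Complex.continuous_ofReal.comp_continuousOn hψ'c))).pow 2
    · intro x hx; exact pow_ne_zero 2 (hcne x hx)
  have hintF'g : ContinuousOn (fun x => Complex.I * L * (ψ' x : ℂ) * F x * g x) s := by
    exact (((continuous_const.continuousOn).mul
      (Complex.continuous_ofReal.comp_continuousOn hψ'c)).mul hFc).mul hgc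
  have hII1 : IntervalIntegrable (fun x => Complex.I * L * (ψ' x : ℂ) * F x * g x) volume a b :=
    hintF'g.intervalIntegrable_of_Icc hab
  have hII2 : IntervalIntegrable (fun x => F x *
      (-(Complex.I * L * (ψ'' x : ℂ)) / (Complex.I * L * (ψ' x : ℂ)) ^ 2)) volume a b :=
    hintFg'.intervalIntegrable_of_Icc hab
  have hFTC : (∫ x in a..b, (Complex.I * L * (ψ' x : ℂ) * F x * g x +
      F x * (-(Complex.I * L * (ψ'' x : ℂ)) / (Complex.I * L * (ψ' x : ℂ)) ^ 2))) =
      F b * g b - F a * g a := by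
    apply intervalIntegral.integral_eq_sub_of_hasDeriv_right_of_le hab
      ((hFc.mul hgc))
      (fun x hx => ((hHd x (Ioo_subset_Icc_self hx)).hasDerivAt
        (Icc_mem_nhds hx.1 hx.2)).hasDerivWithinAt)
      (hII1.add hII2)
  have hsplit : (∫ x in a..b, Complex.I * L * (ψ' x : ℂ) * F x * g x) =
      F b * g b - F a * g a - ∫ x in a..b, F x *
        (-(Complex.I * L * (ψ'' x : ℂ)) / (Complex.I * L * (ψ' x : ℂ)) ^ 2) := by
    rw [← hFTC, intervalIntegral.integral_add hII1 hII2]; ring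
  have hEeq : (∫ ξ in a..b, Complex.exp (Complex.I * L * (ψ ξ : ℂ))) =
      ∫ x in a..b, Complex.I * L * (ψ' x : ℂ) * F x * g x := by
    apply intervalIntegral.integral_congr
    intro x hx
    rw [uIcc_of_le hab] at hx
    simp only [hF, hgdef]
    rw [mul_comm _ (Complex.exp _)]
    exact (mul_inv_cancel_right₀ (hcne x hx) _).symm
  -- norm of g
  have hgnorm : ∀ x ∈ s, ‖g x‖ ≤ (L * μ)⁻¹ := by
    intro x hx
    have h1 : ‖Complex.I * L * (ψ' x : ℂ)‖ = L * |ψ' x| := by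
      simp [norm_mul, abs_of_pos hL]
    have h2 : L * μ ≤ L * |ψ' x| := by
      have := hμψ x hx; nlinarith
    rw [hgdef]
    simp only [norm_inv, h1]
    exact inv_anti₀ (by positivity) h2
  -- FTC for the real integral
  have hd2' : ∀ x ∈ Ioo a b, HasDerivAt ψ' (ψ'' x) x := fun x hx =>
    (hd2 x (Ioo_subset_Icc_self hx)).hasDerivAt (Icc_mem_nhds hx.1 hx.2)
  have hRc : ContinuousOn (fun x => -(ψ' x)⁻¹) s := by
    exact (hψ'c.inv₀ hne).neg
  have hRd : ∀ x ∈ Ioo a b, HasDerivWithinAt (fun y => -(ψ' y)⁻¹)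
      (ψ'' x / ψ' x ^ 2) (Ioi x) x := by
    intro x hx
    have := ((hd2' x hx).inv (hne x (Ioo_subset_Icc_self hx))).neg
    have h2 : HasDerivWithinAt (-ψ'⁻¹) (ψ'' x / ψ' x ^ 2) (Ioi x) x := by
      simpa [neg_div] using this.hasDerivWithinAt
    exact h2
  have hRint : ContinuousOn (fun x => ψ'' x / ψ' x ^ 2) s := by
    exact hc2.div (hψ'c.pow 2) (fun x hx => pow_ne_zero 2 (hne x hx))
  have hFTC2 : (∫ x in a..b, ψ'' x / ψ' x ^ 2) = (ψ' a)⁻¹ - (ψ' b)⁻¹ := by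
    have := intervalIntegral.integral_eq_sub_of_hasDeriv_right_of_le hab hRc hRd
      (hRint.intervalIntegrable_of_Icc hab)
    rw [this]; ring
  have hinvbound : (ψ' a)⁻¹ - (ψ' b)⁻¹ ≤ μ⁻¹ ∧ (ψ' b)⁻¹ - (ψ' a)⁻¹ ≤ μ⁻¹ := by
    have ha : a ∈ s := ⟨le_refl a, hab⟩
    have hb : b ∈ s := ⟨hab, le_refl b⟩
    rcases hsame with h | h
    · have h1 := h a ha; have h2 := h b hb
      have i1 : (0:ℝ) < (ψ' a)⁻¹ := inv_pos.mpr (by linarith)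
      have i2 : (0:ℝ) < (ψ' b)⁻¹ := inv_pos.mpr (by linarith)
      have i3 : (ψ' a)⁻¹ ≤ μ⁻¹ := inv_anti₀ hμ h1
      have i4 : (ψ' b)⁻¹ ≤ μ⁻¹ := inv_anti₀ hμ h2
      constructor <;> linarith
    · have h1 := h a ha; have h2 := h b hb
      have j1 : ψ' a < 0 := by linarith
      have j2 : ψ' b < 0 := by linarith
      have i1 : (ψ' a)⁻¹ < 0 := inv_lt_zero.mpr j1
      have i2 : (ψ' b)⁻¹ < 0 := inv_lt_zero.mpr j2
      have i3 : -μ⁻¹ ≤ (ψ' a)⁻¹ := by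
        rw [neg_le, ← inv_neg]
        exact inv_anti₀ hμ (by linarith)
      have i4 : -μ⁻¹ ≤ (ψ' b)⁻¹ := by
        rw [neg_le, ← inv_neg]
        exact inv_anti₀ hμ (by linarith)
      constructor <;> linarith
  -- bound the integral of F * g'
  have hnormint : ‖∫ x in a..b, F x *
      (-(Complex.I * L * (ψ'' x : ℂ)) / (Complex.I * L * (ψ' x : ℂ)) ^ 2)‖ ≤ (L * μ)⁻¹ := by
    have step1 : ‖∫ x in a..b, F x *
        (-(Complex.I * L * (ψ'' x : ℂ)) / (Complex.I * L * (ψ' x : ℂ)) ^ 2)‖ ≤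
        ∫ x in a..b, ‖F x *
        (-(Complex.I * L * (ψ'' x : ℂ)) / (Complex.I * L * (ψ' x : ℂ)) ^ 2)‖ :=
      intervalIntegral.norm_integral_le_integral_norm hab
    have hptw : ∀ x ∈ uIcc a b, ‖F x *
        (-(Complex.I * L * (ψ'' x : ℂ)) / (Complex.I * L * (ψ' x : ℂ)) ^ 2)‖ =
        (1/L) * (|ψ'' x| / ψ' x ^ 2) := by
      intro x hx
      rw [uIcc_of_le hab] at hx
      have hF1 : ‖F x‖ = 1 := norm_osc L (ψ x)
      rw [norm_mul, hF1, one_mul, norm_div, norm_neg]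
      have e1 : ‖Complex.I * L * (ψ'' x : ℂ)‖ = L * |ψ'' x| := by
        simp [norm_mul, abs_of_pos hL]
      have e2 : ‖(Complex.I * L * (ψ' x : ℂ)) ^ 2‖ = L^2 * ψ' x ^ 2 := by
        rw [norm_pow]
        have : ‖Complex.I * L * (ψ' x : ℂ)‖ = L * |ψ' x| := by
          simp [norm_mul, abs_of_pos hL]
        rw [this]
        rw [mul_pow, sq_abs]
      rw [e1, e2]
      have hL2 : (L:ℝ) ≠ 0 := ne_of_gt hL
      have hp : ψ' x ^ 2 ≠ 0 := pow_ne_zero 2 (hne x hx)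
      field_simp
    have step2 : (∫ x in a..b, ‖F x *
        (-(Complex.I * L * (ψ'' x : ℂ)) / (Complex.I * L * (ψ' x : ℂ)) ^ 2)‖) =
        ∫ x in a..b, (1/L) * (|ψ'' x| / ψ' x ^ 2) :=
      intervalIntegral.integral_congr hptw
    have step3 : (∫ x in a..b, (1/L) * (|ψ'' x| / ψ' x ^ 2)) ≤ (L * μ)⁻¹ := by
      rcases hsgn with hp | hn
      · have e3 : (∫ x in a..b, (1/L) * (|ψ'' x| / ψ' x ^ 2)) =
            ∫ x in a..b, (1/L) * (ψ'' x / ψ' x ^ 2) := by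
          apply intervalIntegral.integral_congr
          intro x hx
          rw [uIcc_of_le hab] at hx
          simp only [abs_of_nonneg (hp x hx)]
        rw [e3, intervalIntegral.integral_const_mul, hFTC2]
        have := hinvbound.1
        rw [mul_inv]
        have hL' : (0:ℝ) < 1/L := by positivity
        calc (1/L) * ((ψ' a)⁻¹ - (ψ' b)⁻¹) ≤ (1/L) * μ⁻¹ := by nlinarith
        _ = L⁻¹ * μ⁻¹ := by rw [one_div]
      · have e3 : (∫ x in a..b, (1/L) * (|ψ'' x| / ψ' x ^ 2)) =
            ∫ x in a..b, (1/L) * -(ψ'' x / ψ' x ^ 2) := by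
          apply intervalIntegral.integral_congr
          intro x hx
          rw [uIcc_of_le hab] at hx
          simp only [abs_of_nonpos (hn x hx)]
          ring
        rw [e3]
        simp only [mul_neg]
        rw [intervalIntegral.integral_neg, intervalIntegral.integral_const_mul, hFTC2]
        have := hinvbound.2
        rw [mul_inv]
        have hL' : (0:ℝ) < 1/L := by positivity
        calc -((1/L) * ((ψ' a)⁻¹ - (ψ' b)⁻¹)) = (1/L) * ((ψ' b)⁻¹ - (ψ' a)⁻¹) := by ring
        _ ≤ (1/L) * μ⁻¹ := by nlinarith
        _ = L⁻¹ * μ⁻¹ := by rw [one_div]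
    calc _ ≤ _ := step1
    _ = _ := step2
    _ ≤ _ := step3
  -- assemble
  rw [hEeq, hsplit]
  have ha : a ∈ s := ⟨le_refl a, hab⟩
  have hb : b ∈ s := ⟨hab, le_refl b⟩
  have n1 : ‖F b * g b‖ ≤ (L * μ)⁻¹ := by
    rw [norm_mul, norm_osc L (ψ b), one_mul]; exact hgnorm b hb
  have n2 : ‖F a * g a‖ ≤ (L * μ)⁻¹ := by
    rw [norm_mul, norm_osc L (ψ a), one_mul]; exact hgnorm a ha
  have : ‖F b * g b - F a * g a - ∫ x in a..b, F x *
      (-(Complex.I * L * (ψ'' x : ℂ)) / (Complex.I * L * (ψ' x : ℂ)) ^ 2)‖ ≤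
      ‖F b * g b‖ + ‖F a * g a‖ + ‖∫ x in a..b, F x *
      (-(Complex.I * L * (ψ'' x : ℂ)) / (Complex.I * L * (ψ' x : ℂ)) ^ 2)‖ := by
    calc _ ≤ ‖F b * g b - F a * g a‖ + ‖∫ x in a..b, F x *
        (-(Complex.I * L * (ψ'' x : ℂ)) / (Complex.I * L * (ψ' x : ℂ)) ^ 2)‖ :=
      norm_sub_le _ _
    _ ≤ _ := by
      have := norm_sub_le (F b * g b) (F a * g a)
      linarith
  calc _ ≤ _ := this
  _ ≤ (L*μ)⁻¹ + (L*μ)⁻¹ + (L*μ)⁻¹ := by linarith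
  _ = 3 / (L * μ) := by rw [div_eq_mul_inv]; ring

lemma sign_const {a b μ : ℝ} (hμ : 0 < μ) {g : ℝ → ℝ} (hc : ContinuousOn g (Icc a b))
    (h : ∀ x ∈ Icc a b, μ ≤ |g x|) :
    (∀ x ∈ Icc a b, μ ≤ g x) ∨ (∀ x ∈ Icc a b, g x ≤ -μ) := by
  have halt : ∀ x ∈ Icc a b, μ ≤ g x ∨ g x ≤ -μ := by
    intro x hx
    rcases le_abs.mp (h x hx) with h1 | h1
    · exact Or.inl h1
    · exact Or.inr (by linarith)
  by_cases H : ∀ x₀ ∈ Icc a b, μ ≤ g x₀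
  · exact Or.inl H
  push_neg at H
  obtain ⟨x₀, hx₀, hgx₀⟩ := H
  have hgx₀' : g x₀ ≤ -μ := (halt x₀ hx₀).resolve_left (not_le.mpr hgx₀)
  right
  intro x hx
  by_contra hcon
  have hgx : μ ≤ g x := (halt x hx).resolve_right hcon
  -- IVT between x and x₀
  rcases le_total x x₀ with hle | hle
  · have hsub : Icc x x₀ ⊆ Icc a b := Icc_subset_Icc hx.1 hx₀.2
    have := intermediate_value_Icc' hle (hc.mono hsub)
    have h0 : (0:ℝ) ∈ Icc (g x₀) (g x) := ⟨by linarith, by linarith⟩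
    obtain ⟨c, hc1, hc2⟩ := this h0
    have := h c (hsub hc1); rw [hc2] at this; simp at this; linarith
  · have hsub : Icc x₀ x ⊆ Icc a b := Icc_subset_Icc hx₀.1 hx.2
    have := intermediate_value_Icc hle (hc.mono hsub)
    have h0 : (0:ℝ) ∈ Icc (g x₀) (g x) := ⟨by linarith, by linarith⟩
    obtain ⟨c, hc1, hc2⟩ := this h0
    have := h c (hsub hc1); rw [hc2] at this; simp at this; linarith

lemma incr {a b : ℝ} {g h : ℝ → ℝ}
    (hg : ∀ x ∈ Icc a b, HasDerivWithinAt g (h x) (Icc a b) x)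
    (hh : ∀ x ∈ Icc a b, 1 ≤ h x) :
    ∀ x ∈ Icc a b, ∀ y ∈ Icc a b, x ≤ y → y - x ≤ g y - g x := by
  intro x hx y hy hxy
  have hmono : MonotoneOn (fun t => g t - t) (Icc a b) := by
    apply monotoneOn_of_deriv_nonneg (convex_Icc a b)
    · exact fun t ht => ((hg t ht).sub (hasDerivWithinAt_id t _)).continuousWithinAt
    · intro t ht
      rw [interior_Icc] at ht
      exact (((hg t (Ioo_subset_Icc_self ht)).sub (hasDerivWithinAt_id t _)).hasDerivAt
        (Icc_mem_nhds ht.1 ht.2)).differentiableAt.differentiableWithinAt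
    · intro t ht
      rw [interior_Icc] at ht
      have hd := (((hg t (Ioo_subset_Icc_self ht)).sub (hasDerivWithinAt_id t _)).hasDerivAt
        (Icc_mem_nhds ht.1 ht.2)).deriv
      rw [show (fun t => g t - t) = g - id from rfl, hd]
      linarith [hh t (Ioo_subset_Icc_self ht)]
  have := hmono hx hy hxy
  simp only at this
  linarith

lemma split (a b δ : ℝ) (hab : a ≤ b) (hδ : 0 < δ) (g h : ℝ → ℝ)
    (hg : ∀ x ∈ Icc a b, HasDerivWithinAt g (h x) (Icc a b) x)
    (hh : ∀ x ∈ Icc a b, 1 ≤ h x) :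
    ∃ u v, a ≤ u ∧ u ≤ v ∧ v ≤ b ∧ v - u ≤ 4*δ ∧
      (a < u → ∀ x ∈ Icc a u, g x ≤ -δ) ∧ (v < b → ∀ x ∈ Icc v b, δ ≤ g x) := by
  have hgc : ContinuousOn g (Icc a b) := fun x hx => (hg x hx).continuousWithinAt
  have hincr := incr hg hh
  have hgmono : ∀ x ∈ Icc a b, ∀ y ∈ Icc a b, x ≤ y → g x ≤ g y := by
    intro x hx y hy hxy; have := hincr x hx y hy hxy; linarith
  set S1 : Set ℝ := insert a {x | x ∈ Icc a b ∧ g x ≤ -δ} with hS1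
  set S2 : Set ℝ := insert b {x | x ∈ Icc a b ∧ δ ≤ g x} with hS2
  have hS1sub : S1 ⊆ Icc a b := by
    intro x hx; rcases hx with rfl | hx
    · exact ⟨le_refl _, hab⟩
    · exact hx.1
  have hS2sub : S2 ⊆ Icc a b := by
    intro x hx; rcases hx with rfl | hx
    · exact ⟨hab, le_refl _⟩
    · exact hx.1
  have hS1ne : S1.Nonempty := ⟨a, mem_insert _ _⟩
  have hS2ne : S2.Nonempty := ⟨b, mem_insert _ _⟩
  have hS1bdd : BddAbove S1 := (bddAbove_Icc).mono hS1sub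
  have hS2bdd : BddBelow S2 := (bddBelow_Icc).mono hS2sub
  set u := sSup S1 with hu
  set v := sInf S2 with hv
  have hau : a ≤ u := le_csSup hS1bdd (mem_insert _ _)
  have hub : u ≤ b := csSup_le hS1ne (fun x hx => (hS1sub hx).2)
  have hav : a ≤ v := le_csInf hS2ne (fun x hx => (hS2sub hx).1)
  have hvb : v ≤ b := csInf_le hS2bdd (mem_insert _ _)
  have huIcc : u ∈ Icc a b := ⟨hau, hub⟩
  have hvIcc : v ∈ Icc a b := ⟨hav, hvb⟩
  have huv : u ≤ v := by
    by_contra hlt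
    push_neg at hlt
    obtain ⟨p, hp, hvp⟩ := exists_lt_of_lt_csSup hS1ne hlt
    rcases hp with rfl | hp
    · exact absurd hvp (not_lt.mpr hav)
    obtain ⟨q, hq, hqp⟩ := exists_lt_of_csInf_lt hS2ne hvp
    rcases hq with rfl | hq
    · exact absurd (lt_of_lt_of_le hqp hp.1.2) (lt_irrefl q)
    · have := hgmono q hq.1 p hp.1 (le_of_lt hqp)
      have h1 := hq.2
      have h2 := hp.2
      linarith
  refine ⟨u, v, hau, huv, hvb, ?_, ?_, ?_⟩
  · -- v - u ≤ 4δ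
    rcases le_or_gt v u with hle | hlt
    · linarith
    have hxIcc : u + (v - u)/4 ∈ Icc a b := ⟨by linarith, by linarith⟩
    have hyIcc : v - (v - u)/4 ∈ Icc a b := ⟨by linarith, by linarith⟩
    have hgx : -δ < g (u + (v - u)/4) := by
      by_contra hcon
      push_neg at hcon
      have hmem : u + (v - u)/4 ∈ S1 := Or.inr ⟨hxIcc, hcon⟩
      have := le_csSup hS1bdd hmem
      rw [← hu] at this
      linarith
    have hgy : g (v - (v - u)/4) < δ := by
      by_contra hcon
      push_neg at hcon
      have hmem : v - (v - u)/4 ∈ S2 := Or.inr ⟨hyIcc, hcon⟩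
      have := csInf_le hS2bdd hmem
      rw [← hv] at this
      linarith
    have hkey := hincr _ hxIcc _ hyIcc (by linarith)
    linarith
  · -- left interval
    intro hault x hx
    have hcase : ∀ z ∈ Ico a u, g z ≤ -δ := by
      intro z hz
      obtain ⟨p, hp, hzp⟩ := exists_lt_of_lt_csSup hS1ne hz.2
      rcases hp with rfl | hp
      · exact absurd hzp (not_lt.mpr hz.1)
      · have hzIcc : z ∈ Icc a b := ⟨hz.1, le_trans (le_of_lt hz.2) hub⟩
        exact le_trans (hgmono z hzIcc p hp.1 (le_of_lt hzp)) hp.2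
    have hgu : g u ≤ -δ := by
      have hcl : u ∈ closure (Ico a u) := by
        rw [closure_Ico (ne_of_lt hault)]
        exact ⟨le_of_lt hault, le_refl u⟩
      have hnb : (nhdsWithin u (Ico a u)).NeBot := mem_closure_iff_nhdsWithin_neBot.mp hcl
      have htd : Filter.Tendsto g (nhdsWithin u (Ico a u)) (nhds (g u)) :=
        ((hgc u huIcc).mono
          (fun z hz => (⟨hz.1, le_trans (le_of_lt hz.2) hub⟩ : z ∈ Icc a b))).tendsto
      exact le_of_tendsto htd (Filter.eventually_of_mem self_mem_nhdsWithin hcase)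
    rcases lt_or_eq_of_le hx.2 with hlt | heq
    · exact hcase x ⟨hx.1, hlt⟩
    · rw [heq]; exact hgu
  · -- right interval
    intro hvblt x hx
    have hcase : ∀ z ∈ Ioc v b, δ ≤ g z := by
      intro z hz
      obtain ⟨q, hq, hqz⟩ := exists_lt_of_csInf_lt hS2ne hz.1
      rcases hq with rfl | hq
      · exact absurd hqz (not_lt.mpr hz.2)
      · have hzIcc : z ∈ Icc a b := ⟨le_trans hav (le_of_lt hz.1), hz.2⟩
        exact le_trans hq.2 (hgmono q hq.1 z hzIcc (le_of_lt hqz))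
    have hgv : δ ≤ g v := by
      have hcl : v ∈ closure (Ioc v b) := by
        rw [closure_Ioc (ne_of_lt hvblt)]
        exact ⟨le_refl v, le_of_lt hvblt⟩
      have hnb : (nhdsWithin v (Ioc v b)).NeBot := mem_closure_iff_nhdsWithin_neBot.mp hcl
      have htd : Filter.Tendsto g (nhdsWithin v (Ioc v b)) (nhds (g v)) :=
        ((hgc v hvIcc).mono
          (fun z hz => (⟨le_trans hav (le_of_lt hz.1), hz.2⟩ : z ∈ Icc a b))).tendsto
      exact ge_of_tendsto htd (Filter.eventually_of_mem self_mem_nhdsWithin hcase)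
    rcases lt_or_eq_of_le hx.1 with hlt | heq
    · exact hcase x ⟨hlt, hx.2⟩
    · rw [← heq]; exact hgv

lemma tri (a u v b : ℝ) (h1 : a ≤ u) (h2 : u ≤ v) (h3 : v ≤ b) (E : ℝ → ℂ)
    (hc : ContinuousOn E (Icc a b)) :
    ‖∫ x in a..b, E x‖ ≤ ‖∫ x in a..u, E x‖ + ‖∫ x in u..v, E x‖ + ‖∫ x in v..b, E x‖ := by
  have i1 : IntervalIntegrable E volume a u :=
    (hc.mono (Icc_subset_Icc le_rfl (le_trans h2 h3))).intervalIntegrable_of_Icc h1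
  have i2 : IntervalIntegrable E volume u v :=
    (hc.mono (Icc_subset_Icc h1 h3)).intervalIntegrable_of_Icc h2
  have i3 : IntervalIntegrable E volume v b :=
    (hc.mono (Icc_subset_Icc (le_trans h1 h2) le_rfl)).intervalIntegrable_of_Icc h3
  rw [← intervalIntegral.integral_add_adjacent_intervals (i1.trans i2) i3,
    ← intervalIntegral.integral_add_adjacent_intervals i1 i2]
  exact norm_add₃_le

def VDC (m : ℕ) (c : ℝ) : Prop := ∀ L μ : ℝ, 0 < L → 0 < μ → ∀ a b : ℝ, a ≤ b →
  ∀ f : ℕ → ℝ → ℝ,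
  (∀ j < m, ∀ x ∈ Icc a b, HasDerivWithinAt (f j) (f (j+1) x) (Icc a b) x) →
  ContinuousOn (f m) (Icc a b) →
  (∀ x ∈ Icc a b, μ ≤ |f m x|) →
  ‖∫ ξ in a..b, Complex.exp (Complex.I * L * ((f 0 ξ : ℝ) : ℂ))‖ ≤
    c * (L * μ) ^ (-(1/(m:ℝ)))

lemma VDC_of_one {m : ℕ} {c : ℝ}
    (h : ∀ L : ℝ, 0 < L → ∀ a b : ℝ, a ≤ b → ∀ f : ℕ → ℝ → ℝ,
      (∀ j < m, ∀ x ∈ Icc a b, HasDerivWithinAt (f j) (f (j+1) x) (Icc a b) x) →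
      ContinuousOn (f m) (Icc a b) →
      (∀ x ∈ Icc a b, 1 ≤ |f m x|) →
      ‖∫ ξ in a..b, Complex.exp (Complex.I * L * ((f 0 ξ : ℝ) : ℂ))‖ ≤ c * L ^ (-(1/(m:ℝ)))) :
    VDC m c := by
  intro L μ hL hμ a b hab f hchain hcont hlow
  have hμ0 : μ ≠ 0 := ne_of_gt hμ
  have key := h (L*μ) (by positivity) a b hab (fun j x => f j x / μ)
    (fun j hj x hx => (hchain j hj x hx).div_const μ)
    (hcont.div_const μ)
    (by
      intro x hx
      have := hlow x hx
      rw [abs_div, abs_of_pos hμ, le_div_iff₀ hμ, one_mul]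
      exact this)
  have hint : ∀ ξ : ℝ, Complex.I * ((L*μ : ℝ) : ℂ) * ((f 0 ξ / μ : ℝ) : ℂ) =
      Complex.I * (L : ℝ) * ((f 0 ξ : ℝ) : ℂ) := by
    intro ξ
    push_cast
    have : (μ : ℂ) ≠ 0 := by exact_mod_cast hμ0
    field_simp
  simp only [hint] at key
  exact key

lemma rpow_half (L : ℝ) (hL : 0 < L) : L * L ^ (-(1/(2:ℝ))) = L ^ ((1:ℝ)/2) := by
  nth_rewrite 1 [← Real.rpow_one L]
  rw [← Real.rpow_add hL]
  norm_num

lemma base_case : ∀ L : ℝ, 0 < L → ∀ a b : ℝ, a ≤ b → ∀ f : ℕ → ℝ → ℝ,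
    (∀ j < 2, ∀ x ∈ Icc a b, HasDerivWithinAt (f j) (f (j+1) x) (Icc a b) x) →
    ContinuousOn (f 2) (Icc a b) →
    (∀ x ∈ Icc a b, 1 ≤ |f 2 x|) →
    ‖∫ ξ in a..b, Complex.exp (Complex.I * L * ((f 0 ξ : ℝ) : ℂ))‖ ≤
      10 * L ^ (-(1/(2:ℝ))) := by
  intro L hL a b hab f hchain hcont hlow
  set δ : ℝ := L ^ (-(1/(2:ℝ))) with hδdef
  have hδ : 0 < δ := Real.rpow_pos_of_pos hL _
  have hLδ : L * δ = L ^ ((1:ℝ)/2) := rpow_half L hL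
  have hLδpos : 0 < L * δ := by positivity
  have hside : 3 / (L * δ) = 3 * δ := by
    rw [hLδ, hδdef, Real.rpow_neg (le_of_lt hL), div_eq_mul_inv]
  have hd0 : ∀ x ∈ Icc a b, HasDerivWithinAt (f 0) (f 1 x) (Icc a b) x :=
    hchain 0 (by norm_num)
  have hd1 : ∀ x ∈ Icc a b, HasDerivWithinAt (f 1) (f 2 x) (Icc a b) x :=
    hchain 1 (by norm_num)
  have hEc : ContinuousOn (fun ξ => Complex.exp (Complex.I * L * ((f 0 ξ : ℝ) : ℂ))) (Icc a b) := by
    apply Complex.continuous_exp.comp_continuousOn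
    exact (continuous_const.continuousOn).mul
      (Complex.continuous_ofReal.comp_continuousOn (fun x hx => (hd0 x hx).continuousWithinAt))
  -- get u, v from split (two sign cases)
  have hsgn := sign_const one_pos hcont hlow
  have hsplit : ∃ u v, a ≤ u ∧ u ≤ v ∧ v ≤ b ∧ v - u ≤ 4*δ ∧
      (a < u → ∀ x ∈ Icc a u, δ ≤ |f 1 x|) ∧ (v < b → ∀ x ∈ Icc v b, δ ≤ |f 1 x|) ∧
      ((∀ x ∈ Icc a b, 0 ≤ f 2 x) ∨ (∀ x ∈ Icc a b, f 2 x ≤ 0)) ∧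
      (a < u → ((∀ x ∈ Icc a u, δ ≤ f 1 x) ∨ (∀ x ∈ Icc a u, f 1 x ≤ -δ))) ∧
      (v < b → ((∀ x ∈ Icc v b, δ ≤ f 1 x) ∨ (∀ x ∈ Icc v b, f 1 x ≤ -δ))) := by
    rcases hsgn with hp | hn
    · obtain ⟨u, v, h1, h2, h3, h4, h5, h6⟩ := split a b δ hab hδ (f 1) (f 2) hd1 hp
      refine ⟨u, v, h1, h2, h3, h4, ?_, ?_, Or.inl (fun x hx => by linarith [hp x hx]), ?_, ?_⟩
      · intro hau x hx
        have := h5 hau x hx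
        rw [abs_of_nonpos (by linarith)]; linarith
      · intro hvb x hx
        have := h6 hvb x hx
        rw [abs_of_nonneg (by linarith)]; linarith
      · exact fun hau => Or.inr (h5 hau)
      · exact fun hvb => Or.inl (h6 hvb)
    · obtain ⟨u, v, h1, h2, h3, h4, h5, h6⟩ := split a b δ hab hδ (fun x => -f 1 x) (fun x => -f 2 x)
        (fun x hx => (hd1 x hx).neg) (fun x hx => by show (1:ℝ) ≤ -f 2 x; linarith [hn x hx])
      refine ⟨u, v, h1, h2, h3, h4, ?_, ?_, Or.inr (fun x hx => by linarith [hn x hx]), ?_, ?_⟩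
      · intro hau x hx
        have := h5 hau x hx
        rw [abs_of_nonneg (by linarith)]; linarith
      · intro hvb x hx
        have := h6 hvb x hx
        rw [abs_of_nonpos (by linarith)]; linarith
      · exact fun hau => Or.inl (fun x hx => by linarith [h5 hau x hx])
      · exact fun hvb => Or.inr (fun x hx => by linarith [h6 hvb x hx])
  obtain ⟨u, v, h1, h2, h3, h4, _, _, hsgn2, hL2, hR2⟩ := hsplit
  have hsub1 : Icc a u ⊆ Icc a b := Icc_subset_Icc le_rfl (le_trans h2 h3)
  have hsub2 : Icc v b ⊆ Icc a b := Icc_subset_Icc (le_trans h1 h2) le_rfl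
  have hleft : ‖∫ ξ in a..u, Complex.exp (Complex.I * L * ((f 0 ξ : ℝ) : ℂ))‖ ≤ 3 * δ := by
    rcases eq_or_lt_of_le h1 with heq | hlt
    · rw [← heq]
      simp [intervalIntegral.integral_same]
      positivity
    · rw [← hside]
      exact lemA a u L δ h1 hL hδ (f 0) (f 1) (f 2)
        (fun x hx => (hd0 x (hsub1 hx)).mono hsub1)
        (fun x hx => (hd1 x (hsub1 hx)).mono hsub1)
        (hcont.mono hsub1)
        (by rcases hsgn2 with hp | hn
            · exact Or.inl (fun x hx => hp x (hsub1 hx))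
            · exact Or.inr (fun x hx => hn x (hsub1 hx)))
        (hL2 hlt)
  have hright : ‖∫ ξ in v..b, Complex.exp (Complex.I * L * ((f 0 ξ : ℝ) : ℂ))‖ ≤ 3 * δ := by
    rcases eq_or_lt_of_le h3 with heq | hlt
    · rw [heq]
      simp [intervalIntegral.integral_same]
      positivity
    · rw [← hside]
      exact lemA v b L δ h3 hL hδ (f 0) (f 1) (f 2)
        (fun x hx => (hd0 x (hsub2 hx)).mono hsub2)
        (fun x hx => (hd1 x (hsub2 hx)).mono hsub2)
        (hcont.mono hsub2)
        (by rcases hsgn2 with hp | hn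
            · exact Or.inl (fun x hx => hp x (hsub2 hx))
            · exact Or.inr (fun x hx => hn x (hsub2 hx)))
        (hR2 hlt)
  have hmid : ‖∫ ξ in u..v, Complex.exp (Complex.I * L * ((f 0 ξ : ℝ) : ℂ))‖ ≤ 4 * δ := by
    have := intervalIntegral.norm_integral_le_of_norm_le_const
      (C := 1) (f := fun ξ => Complex.exp (Complex.I * L * ((f 0 ξ : ℝ) : ℂ)))
      (a := u) (b := v)
      (fun x _ => le_of_eq (norm_osc L (f 0 x)))
    rw [one_mul] at this
    calc _ ≤ |v - u| := this
    _ = v - u := abs_of_nonneg (by linarith)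
    _ ≤ 4 * δ := h4
  calc _ ≤ _ := tri a u v b h1 h2 h3 _ hEc
  _ ≤ 3*δ + 4*δ + 3*δ := by linarith
  _ = 10 * L ^ (-(1/(2:ℝ))) := by rw [hδdef]; ring

lemma step_case {m : ℕ} (hm : 2 ≤ m) {c : ℝ} (hc : 0 < c) (hVDC : VDC m c) :
    ∀ L : ℝ, 0 < L → ∀ a b : ℝ, a ≤ b → ∀ f : ℕ → ℝ → ℝ,
    (∀ j < m+1, ∀ x ∈ Icc a b, HasDerivWithinAt (f j) (f (j+1) x) (Icc a b) x) →
    ContinuousOn (f (m+1)) (Icc a b) →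
    (∀ x ∈ Icc a b, 1 ≤ |f (m+1) x|) →
    ‖∫ ξ in a..b, Complex.exp (Complex.I * L * ((f 0 ξ : ℝ) : ℂ))‖ ≤
      (2*c+4) * L ^ (-(1/((m+1:ℕ):ℝ))) := by
  intro L hL a b hab f hchain hcont hlow
  have hm0 : ((m:ℝ)) ≠ 0 := by positivity
  have hm1 : ((m:ℝ)+1) ≠ 0 := by positivity
  set δ : ℝ := L ^ (-(1/((m:ℝ)+1))) with hδdef
  have hδ : 0 < δ := Real.rpow_pos_of_pos hL _
  have hLδpos : 0 < L * δ := by positivity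
  have e1 : L * δ = L ^ (1 + -(1/((m:ℝ)+1))) := by
    rw [Real.rpow_add hL, Real.rpow_one, hδdef]
  have e2 : (L * δ) ^ (-(1/(m:ℝ))) = L ^ (-(1/((m:ℝ)+1))) := by
    rw [e1, ← Real.rpow_mul (le_of_lt hL)]
    congr 1
    field_simp
    ring
  have hdm : ∀ x ∈ Icc a b, HasDerivWithinAt (f m) (f (m+1) x) (Icc a b) x :=
    hchain m (by omega)
  have hfmc : ContinuousOn (f m) (Icc a b) := fun x hx => (hdm x hx).continuousWithinAt
  have hd0 : ∀ x ∈ Icc a b, HasDerivWithinAt (f 0) (f 1 x) (Icc a b) x :=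
    hchain 0 (by omega)
  have hEc : ContinuousOn (fun ξ => Complex.exp (Complex.I * L * ((f 0 ξ : ℝ) : ℂ))) (Icc a b) := by
    apply Complex.continuous_exp.comp_continuousOn
    exact (continuous_const.continuousOn).mul
      (Complex.continuous_ofReal.comp_continuousOn (fun x hx => (hd0 x hx).continuousWithinAt))
  have hsgn := sign_const one_pos hcont hlow
  have hsplit : ∃ u v, a ≤ u ∧ u ≤ v ∧ v ≤ b ∧ v - u ≤ 4*δ ∧
      (a < u → ∀ x ∈ Icc a u, δ ≤ |f m x|) ∧ (v < b → ∀ x ∈ Icc v b, δ ≤ |f m x|) := by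
    rcases hsgn with hp | hn
    · obtain ⟨u, v, h1, h2, h3, h4, h5, h6⟩ := split a b δ hab hδ (f m) (f (m+1)) hdm hp
      refine ⟨u, v, h1, h2, h3, h4, ?_, ?_⟩
      · intro hau x hx
        have := h5 hau x hx
        rw [abs_of_nonpos (by linarith)]; linarith
      · intro hvb x hx
        have := h6 hvb x hx
        rw [abs_of_nonneg (by linarith)]; linarith
    · obtain ⟨u, v, h1, h2, h3, h4, h5, h6⟩ := split a b δ hab hδ
        (fun x => -f m x) (fun x => -f (m+1) x)
        (fun x hx => (hdm x hx).neg)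
        (fun x hx => by show (1:ℝ) ≤ -f (m+1) x; linarith [hn x hx])
      refine ⟨u, v, h1, h2, h3, h4, ?_, ?_⟩
      · intro hau x hx
        have := h5 hau x hx
        rw [abs_of_nonneg (by linarith)]; linarith
      · intro hvb x hx
        have := h6 hvb x hx
        rw [abs_of_nonpos (by linarith)]; linarith
  obtain ⟨u, v, h1, h2, h3, h4, hLs, hRs⟩ := hsplit
  have hsub1 : Icc a u ⊆ Icc a b := Icc_subset_Icc le_rfl (le_trans h2 h3)
  have hsub2 : Icc v b ⊆ Icc a b := Icc_subset_Icc (le_trans h1 h2) le_rfl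
  have hleft : ‖∫ ξ in a..u, Complex.exp (Complex.I * L * ((f 0 ξ : ℝ) : ℂ))‖ ≤
      c * L ^ (-(1/((m:ℝ)+1))) := by
    rcases eq_or_lt_of_le h1 with heq | hlt
    · rw [← heq]
      simp [intervalIntegral.integral_same]
      positivity
    · have := hVDC L δ hL hδ a u h1 f
        (fun j hj x hx => (hchain j (by omega) x (hsub1 hx)).mono hsub1)
        (hfmc.mono hsub1)
        (hLs hlt)
      rwa [e2] at this
  have hright : ‖∫ ξ in v..b, Complex.exp (Complex.I * L * ((f 0 ξ : ℝ) : ℂ))‖ ≤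
      c * L ^ (-(1/((m:ℝ)+1))) := by
    rcases eq_or_lt_of_le h3 with heq | hlt
    · rw [heq]
      simp [intervalIntegral.integral_same]
      positivity
    · have := hVDC L δ hL hδ v b h3 f
        (fun j hj x hx => (hchain j (by omega) x (hsub2 hx)).mono hsub2)
        (hfmc.mono hsub2)
        (hRs hlt)
      rwa [e2] at this
  have hmid : ‖∫ ξ in u..v, Complex.exp (Complex.I * L * ((f 0 ξ : ℝ) : ℂ))‖ ≤ 4 * δ := by
    have := intervalIntegral.norm_integral_le_of_norm_le_const
      (C := 1) (f := fun ξ => Complex.exp (Complex.I * L * ((f 0 ξ : ℝ) : ℂ)))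
      (a := u) (b := v)
      (fun x _ => le_of_eq (norm_osc L (f 0 x)))
    rw [one_mul] at this
    calc _ ≤ |v - u| := this
    _ = v - u := abs_of_nonneg (by linarith)
    _ ≤ 4 * δ := h4
  have hcast : ((m+1:ℕ):ℝ) = (m:ℝ)+1 := by push_cast; ring
  calc _ ≤ _ := tri a u v b h1 h2 h3 _ hEc
  _ ≤ c * L ^ (-(1/((m:ℝ)+1))) + 4*δ + c * L ^ (-(1/((m:ℝ)+1))) := by linarith
  _ = (2*c+4) * L ^ (-(1/((m+1:ℕ):ℝ))) := by rw [hcast, hδdef]; ring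

lemma vdc_all : ∀ m : ℕ, 2 ≤ m → ∃ c : ℝ, 0 < c ∧ VDC m c := by
  intro m hm
  induction m, hm using Nat.le_induction with
  | base =>
    refine ⟨10, by norm_num, VDC_of_one ?_⟩
    have : ((2:ℕ):ℝ) = 2 := by norm_num
    simpa [this] using base_case
  | succ m hm ih =>
    obtain ⟨c, hc, hv⟩ := ih
    exact ⟨2*c+4, by linarith, VDC_of_one (step_case hm hc hv)⟩

/-- The Van der Corput lemma: if the `k`-th derivative (`k ≥ 2`) of a real phase `ψ`
satisfies `|ψ^{(k)}| ≥ 1` on `[a, b]`, then the oscillatory integral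
`∫_a^b e^{iλψ(ξ)} dξ` is bounded by `c_k λ^{-1/k}`, with `c_k` depending only on `k`. -/
theorem van_der_corput :
    ∀ k : ℕ, 2 ≤ k → ∃ c > 0, ∀ a b : ℝ, a < b → ∀ ψ : ℝ → ℝ,
      ContDiffOn ℝ k ψ (Icc a b) →
      (∀ ξ ∈ Icc a b, 1 ≤ |iteratedDerivWithin k ψ (Icc a b) ξ|) →
      ∀ L : ℝ, 0 < L →
        ‖∫ ξ in a..b, Complex.exp (Complex.I * (L : ℂ) * ((ψ ξ : ℝ) : ℂ))‖ ≤
          c * L ^ (-(1 / (k : ℝ))) := by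
  intro k hk
  obtain ⟨c, hc, hv⟩ := vdc_all k hk
  refine ⟨c, hc, ?_⟩
  intro a b hab ψ hψ hlow L hL
  have hU : UniqueDiffOn ℝ (Icc a b) := uniqueDiffOn_Icc hab
  have key := hv L 1 hL one_pos a b (le_of_lt hab)
    (fun j => iteratedDerivWithin j ψ (Icc a b))
    (by
      intro j hj x hx
      have hdiff : DifferentiableWithinAt ℝ (iteratedDerivWithin j ψ (Icc a b)) (Icc a b) x :=
        (hψ.differentiableOn_iteratedDerivWithin (by exact_mod_cast hj) hU) x hx
      have := hdiff.hasDerivWithinAt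
      rwa [← iteratedDerivWithin_succ] at this)
    (hψ.continuousOn_iteratedDerivWithin (le_refl _) hU)
    (by simpa using hlow)
  rw [mul_one] at key
  simpa [iteratedDerivWithin_zero] using key
end

section
/- There exists a constant C > 0 such that for every integer N ≥ 1, every family of complex coefficients (a_k)_{|k| ≤ N}, and every real t with 0 < |t| ≤ 1/N, one has sup_{x ∈ ℝ} |Σ_{|k| ≤ N} a_k e^{i(t k² + k x)}| ≤ C |t|^{-1/2} ∫_0^{2π} |Σ_{|k| ≤ N} a_k e^{i k x}| dx. -/
open Real MeasureTheory

noncomputable section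

namespace TorusDispersion

/-- cotangent is antitone on (0,π) -/
lemma cot_anti {a b : ℝ} (ha : 0 < a) (hab : a ≤ b) (hb : b < π) :
    Real.cos b / Real.sin b ≤ Real.cos a / Real.sin a := by
  have h1 : Real.cos a / Real.sin a = Real.tan (π/2 - a) := by
    rw [Real.tan_eq_sin_div_cos, Real.sin_pi_div_two_sub, Real.cos_pi_div_two_sub]
  have h2 : Real.cos b / Real.sin b = Real.tan (π/2 - b) := by
    rw [Real.tan_eq_sin_div_cos, Real.sin_pi_div_two_sub, Real.cos_pi_div_two_sub]
  rw [h1, h2]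
  rcases eq_or_lt_of_le hab with rfl | hab
  · exact le_refl _
  · exact le_of_lt (Real.tan_lt_tan_of_lt_of_lt_pi_div_two (by linarith) (by linarith) (by linarith))

/-- cot θ ≤ 1/θ on (0, π/2) -/
lemma cot_le {θ : ℝ} (h0 : 0 < θ) (h1 : θ < π/2) :
    Real.cos θ / Real.sin θ ≤ 1/θ := by
  have ht := Real.lt_tan h0 h1
  have hs : 0 < Real.sin θ := Real.sin_pos_of_pos_of_lt_pi h0 (by linarith [Real.pi_pos])
  have hc : 0 < Real.cos θ := Real.cos_pos_of_mem_Ioo ⟨by linarith, h1⟩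
  rw [Real.tan_eq_sin_div_cos] at ht
  rw [div_le_div_iff₀ hs h0]
  calc Real.cos θ * θ ≤ Real.cos θ * (Real.sin θ / Real.cos θ) := by
        exact mul_le_mul_of_nonneg_left (le_of_lt ht) (le_of_lt hc)
    _ = Real.sin θ := by field_simp
    _ = 1 * Real.sin θ := by ring

/-- the key algebraic identity for 1/(1 - e^{iβ}) -/
lemma one_sub_exp_mul (β : ℝ) (hs : Real.sin (β/2) ≠ 0) :
    (1 - Complex.exp (Complex.I * (β:ℝ))) *
      (1/2 + (Real.cos (β/2) / Real.sin (β/2) : ℝ) * Complex.I / 2) = 1 := by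
  have key : ∀ s c : ℂ, s ≠ 0 → s^2+c^2=1 →
      (1 - (c + s*Complex.I)^2) * (1/2 + (c/s)*Complex.I/2) = 1 := by
    intro s c hs0 hsc
    field_simp
    linear_combination (s - c*Complex.I) * hsc - (c*s^2*Complex.I + 2*c^2*s + s^3) * Complex.I_sq
  have hs' : Complex.sin ((β:ℂ)/2) ≠ 0 := by
    have h : ((Real.sin (β/2) : ℝ) : ℂ) ≠ 0 := Complex.ofReal_ne_zero.mpr hs
    rwa [Complex.ofReal_sin, Complex.ofReal_div, Complex.ofReal_ofNat] at h
  have hexp : Complex.exp (Complex.I * (β:ℝ))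
      = (Complex.cos ((β:ℂ)/2) + Complex.sin ((β:ℂ)/2) * Complex.I)^2 := by
    have h2 : Complex.I * (β:ℝ) = (2:ℕ) * (((β:ℂ)/2) * Complex.I) := by push_cast; ring
    rw [h2, Complex.exp_nat_mul, Complex.exp_mul_I]
  rw [hexp]
  rw [show ((Real.cos (β/2) / Real.sin (β/2) : ℝ) : ℂ)
      = Complex.cos ((β:ℂ)/2) / Complex.sin ((β:ℂ)/2) by
    push_cast [Complex.ofReal_cos, Complex.ofReal_sin]; ring_nf]
  have := key _ _ hs' (Complex.sin_sq_add_cos_sq ((β:ℂ)/2))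
  linear_combination this

lemma icc_insert (M b : ℤ) (h : M ≤ b + 1) :
    Finset.Icc M (b+1) = insert (b+1) (Finset.Icc M b) := by
  ext k; simp [Finset.mem_Icc, Finset.mem_insert]; omega

/-- the summand -/
noncomputable def klv (t x : ℝ) (k : ℤ) : ℂ :=
  Complex.exp (Complex.I * ((t*(k:ℝ)^2 + (k:ℝ)*x : ℝ) : ℂ))

/-- the phase difference, shifted into the window -/
noncomputable def klβ (t x : ℝ) (m k : ℤ) : ℝ := 2*t*k + t + x - 2*π*m

noncomputable def klg (t x : ℝ) (m k : ℤ) : ℝ :=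
  Real.cos (klβ t x m k / 2) / Real.sin (klβ t x m k / 2)

noncomputable def klu (t x : ℝ) (m k : ℤ) : ℂ :=
  1/2 + ((klg t x m k : ℝ) : ℂ) * Complex.I / 2

lemma klv_norm (t x : ℝ) (k : ℤ) : ‖klv t x k‖ = 1 := by
  rw [klv, mul_comm]
  exact Complex.norm_exp_ofReal_mul_I _

lemma klv_step (t x : ℝ) (m k : ℤ) :
    klv t x (k+1) = klv t x k * Complex.exp (Complex.I * ((klβ t x m k : ℝ) : ℂ)) := by
  have h1 : Complex.I * ((t*((k+1:ℤ):ℝ)^2 + ((k+1:ℤ):ℝ)*x : ℝ) : ℂ)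
      = (Complex.I * ((t*(k:ℝ)^2 + (k:ℝ)*x : ℝ) : ℂ) + Complex.I * ((klβ t x m k : ℝ) : ℂ))
        + ((m : ℤ) : ℂ) * (2 * (π:ℂ) * Complex.I) := by
    rw [klβ]; push_cast; ring
  rw [klv, klv, h1, Complex.exp_add, Complex.exp_add, Complex.exp_int_mul_two_pi_mul_I, mul_one]

/-- Kuzmin–Landau: exponential sum with quadratic phase whose first differences stay
`δ`-away from `2πℤ` (within one period window) is bounded by `2 + 4/δ`. -/
lemma kuzmin_landau {t x δ : ℝ} (ht : 0 < t) (hδ0 : 0 < δ) (hδ1 : δ ≤ 1)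
    (M M' : ℤ) (m : ℤ)
    (hgood : ∀ k : ℤ, M ≤ k → k ≤ M' - 1 →
      2*π*m + δ ≤ 2*t*k + t + x ∧ 2*t*k + t + x ≤ 2*π*m + 2*π - δ) :
    ‖∑ k ∈ Finset.Icc M M', klv t x k‖ ≤ 2 + 4/δ := by
  have hπ := Real.pi_gt_three
  set G : ℝ := Real.cos (δ/2) / Real.sin (δ/2) with hG
  have hδpos2 : 0 < δ/2 := by linarith
  have hδlt : δ/2 < π/2 := by linarith
  have hG2 : G ≤ 2/δ := by
    have h := cot_le hδpos2 hδlt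
    rw [hG]
    calc Real.cos (δ/2) / Real.sin (δ/2) ≤ 1/(δ/2) := h
      _ = 2/δ := by field_simp
  have hGnn : 0 ≤ G := by
    apply div_nonneg
    · exact Real.cos_nonneg_of_mem_Icc ⟨by linarith, by linarith⟩
    · exact (Real.sin_pos_of_pos_of_lt_pi hδpos2 (by linarith)).le
  have hβrange : ∀ k : ℤ, M ≤ k → k ≤ M' - 1 → δ ≤ klβ t x m k ∧ klβ t x m k ≤ 2*π - δ := by
    intro k h1 h2
    obtain ⟨ha, hb⟩ := hgood k h1 h2
    rw [klβ]
    constructor <;> linarith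
  have hgabs : ∀ k : ℤ, M ≤ k → k ≤ M' - 1 → |klg t x m k| ≤ G := by
    intro k h1 h2
    obtain ⟨ha, hb⟩ := hβrange k h1 h2
    rw [abs_le]
    constructor
    · have h := cot_anti (a := klβ t x m k / 2) (b := π - δ/2) (by linarith) (by linarith)
        (by linarith)
      rw [Real.cos_pi_sub, Real.sin_pi_sub, neg_div] at h
      rw [klg, hG]
      exact h
    · exact cot_anti hδpos2 (by linarith) (by linarith)
  have hganti : ∀ k : ℤ, M ≤ k → k + 1 ≤ M' - 1 → klg t x m (k+1) ≤ klg t x m k := by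
    intro k h1 h2
    obtain ⟨ha, hb⟩ := hβrange k h1 (by omega)
    obtain ⟨ha', hb'⟩ := hβrange (k+1) (by omega) h2
    have hββ : klβ t x m k ≤ klβ t x m (k+1) := by
      rw [klβ, klβ]; push_cast; nlinarith
    exact cot_anti (by linarith) (by linarith) (by linarith)
  have hsinne : ∀ k : ℤ, M ≤ k → k ≤ M' - 1 → Real.sin (klβ t x m k / 2) ≠ 0 := by
    intro k h1 h2
    obtain ⟨ha, hb⟩ := hβrange k h1 h2
    exact (Real.sin_pos_of_pos_of_lt_pi (by linarith) (by linarith)).ne'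
  have hunorm : ∀ k : ℤ, M ≤ k → k ≤ M' - 1 → ‖klu t x m k‖ ≤ (1+G)/2 := by
    intro k h1 h2
    rw [klu]
    calc ‖(1/2 : ℂ) + ((klg t x m k : ℝ) : ℂ) * Complex.I / 2‖
        ≤ ‖(1/2 : ℂ)‖ + ‖((klg t x m k : ℝ) : ℂ) * Complex.I / 2‖ := norm_add_le _ _
      _ = 1/2 + |klg t x m k|/2 := by
          simp [norm_div, Complex.norm_real, Real.norm_eq_abs, Complex.norm_I]
      _ ≤ (1+G)/2 := by have := hgabs k h1 h2; linarith
  have hone : ∀ k : ℤ, M ≤ k → k ≤ M' - 1 →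
      (1 - Complex.exp (Complex.I * ((klβ t x m k : ℝ) : ℂ))) * klu t x m k = 1 := by
    intro k h1 h2
    have h := one_sub_exp_mul (klβ t x m k) (hsinne k h1 h2)
    simp only [klu, klg]
    exact h
  have hexpu : ∀ k : ℤ, M ≤ k → k ≤ M' - 1 →
      Complex.exp (Complex.I * ((klβ t x m k : ℝ) : ℂ)) * klu t x m k = klu t x m k - 1 := by
    intro k h1 h2
    have h := hone k h1 h2
    linear_combination -h
  have hudiff : ∀ k : ℤ, M ≤ k → k + 1 ≤ M' - 1 →
      ‖klu t x m (k+1) - klu t x m k‖ = (klg t x m k - klg t x m (k+1))/2 := by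
    intro k h1 h2
    rw [klu, klu]
    rw [show (1/2 : ℂ) + ((klg t x m (k+1) : ℝ) : ℂ) * Complex.I / 2
        - (1/2 + ((klg t x m k : ℝ) : ℂ) * Complex.I / 2)
        = (((klg t x m (k+1) - klg t x m k : ℝ)) : ℂ) * (Complex.I / 2) from by push_cast; ring]
    rw [norm_mul, Complex.norm_real, Real.norm_eq_abs,
      abs_of_nonpos (by have := hganti k h1 h2; linarith)]
    simp [norm_div, Complex.norm_I]
    ring
  have main : ∀ n : ℕ, M + n ≤ M' - 1 →
      ‖(∑ k ∈ Finset.Icc M (M + (n:ℤ)), klv t x k)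
          + klv t x (M + (n:ℤ) + 1) * klu t x m (M + (n:ℤ))‖
        ≤ (1+G)/2 + (klg t x m M - klg t x m (M + (n:ℤ)))/2 := by
    intro n
    induction n with
    | zero =>
      intro h
      have h' : M ≤ M' - 1 := by push_cast at h; omega
      simp only [Nat.cast_zero, add_zero, Finset.Icc_self, Finset.sum_singleton]
      rw [klv_step t x m M, mul_assoc, hexpu M le_rfl h']
      rw [show klv t x M + klv t x M * (klu t x m M - 1) = klv t x M * klu t x m M from by ring]
      rw [norm_mul, klv_norm, one_mul]
      have := hunorm M le_rfl h'
      linarith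
    | succ n ih =>
      intro h
      have hn : M + (n:ℤ) ≤ M' - 1 := by push_cast at h; omega
      have hcast : ((n+1:ℕ):ℤ) = (n:ℤ)+1 := by push_cast; ring
      rw [hcast, show M + ((n:ℤ)+1) = M + (n:ℤ) + 1 from by ring]
      have hnotmem : (M + (n:ℤ) + 1) ∉ Finset.Icc M (M + (n:ℤ)) := by
        simp only [Finset.mem_Icc]; omega
      have hsum : (∑ k ∈ Finset.Icc M (M + (n:ℤ) + 1), klv t x k)
          = (∑ k ∈ Finset.Icc M (M + (n:ℤ)), klv t x k) + klv t x (M + (n:ℤ) + 1) := by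
        rw [icc_insert M (M + (n:ℤ)) (by omega), Finset.sum_insert hnotmem]
        ring
      have hgood1 : M ≤ M + (n:ℤ) + 1 := by omega
      have hgood2 : M + (n:ℤ) + 1 ≤ M' - 1 := by push_cast at h; omega
      have hkey : (∑ k ∈ Finset.Icc M (M + (n:ℤ) + 1), klv t x k)
            + klv t x (M + (n:ℤ) + 1 + 1) * klu t x m (M + (n:ℤ) + 1)
          = ((∑ k ∈ Finset.Icc M (M + (n:ℤ)), klv t x k)
              + klv t x (M + (n:ℤ) + 1) * klu t x m (M + (n:ℤ)))
            + klv t x (M + (n:ℤ) + 1) * (klu t x m (M + (n:ℤ) + 1) - klu t x m (M + (n:ℤ))) := by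
        rw [hsum, klv_step t x m (M + (n:ℤ) + 1), mul_assoc, hexpu _ hgood1 hgood2]
        ring
      rw [hkey]
      calc ‖_ + _‖ ≤ ‖(∑ k ∈ Finset.Icc M (M + (n:ℤ)), klv t x k)
              + klv t x (M + (n:ℤ) + 1) * klu t x m (M + (n:ℤ))‖
            + ‖klv t x (M + (n:ℤ) + 1) * (klu t x m (M + (n:ℤ) + 1) - klu t x m (M + (n:ℤ)))‖ :=
          norm_add_le _ _
        _ ≤ ((1+G)/2 + (klg t x m M - klg t x m (M + (n:ℤ)))/2)
            + (klg t x m (M + (n:ℤ)) - klg t x m (M + (n:ℤ) + 1))/2 := by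
          have h1 := ih hn
          have h2 : ‖klv t x (M + (n:ℤ) + 1) * (klu t x m (M + (n:ℤ) + 1) - klu t x m (M + (n:ℤ)))‖
              = (klg t x m (M + (n:ℤ)) - klg t x m (M + (n:ℤ) + 1))/2 := by
            rw [norm_mul, klv_norm, one_mul]
            exact hudiff (M + (n:ℤ)) (by omega) hgood2
          linarith
        _ = (1+G)/2 + (klg t x m M - klg t x m (M + (n:ℤ) + 1))/2 := by ring
  -- conclusion
  have h4δ : 0 < 4/δ := by positivity
  rcases lt_or_ge M' M with hlt | hle
  · rw [Finset.Icc_eq_empty (by omega), Finset.sum_empty, norm_zero]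
    linarith
  rcases eq_or_lt_of_le hle with rfl | hlt
  · rw [Finset.Icc_self, Finset.sum_singleton, klv_norm]
    linarith
  · set n : ℕ := (M' - 1 - M).toNat with hn
    have hncast : (n:ℤ) = M' - 1 - M := by rw [hn]; exact Int.toNat_of_nonneg (by omega)
    have hmain := main n (by omega)
    rw [show M + (n:ℤ) = M' - 1 from by omega, show M' - 1 + 1 = M' from by ring] at hmain
    have hsplit : (∑ k ∈ Finset.Icc M M', klv t x k)
        = (∑ k ∈ Finset.Icc M (M'-1), klv t x k) + klv t x M' := by
      have h1 := icc_insert M (M'-1) (by omega)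
      rw [show M' - 1 + 1 = M' from by ring] at h1
      rw [h1, Finset.sum_insert (by simp only [Finset.mem_Icc]; omega)]
      ring
    rw [hsplit]
    have hrw : (∑ k ∈ Finset.Icc M (M'-1), klv t x k) + klv t x M'
        = ((∑ k ∈ Finset.Icc M (M'-1), klv t x k) + klv t x M' * klu t x m (M'-1))
          + klv t x M' * (1 - klu t x m (M'-1)) := by ring
    rw [hrw]
    have hb1 := hgabs M (le_refl M) (by omega)
    have hb2 := hgabs (M'-1) (by omega) (by omega)
    have hu2 := hunorm (M'-1) (by omega) (by omega)
    calc ‖_ + _‖ ≤ ‖(∑ k ∈ Finset.Icc M (M'-1), klv t x k) + klv t x M' * klu t x m (M'-1)‖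
          + ‖klv t x M' * (1 - klu t x m (M'-1))‖ := norm_add_le _ _
      _ ≤ ((1+G)/2 + (klg t x m M - klg t x m (M'-1))/2) + (1 + (1+G)/2) := by
        have h2 : ‖klv t x M' * (1 - klu t x m (M'-1))‖ ≤ 1 + (1+G)/2 := by
          rw [norm_mul, klv_norm, one_mul]
          calc ‖1 - klu t x m (M'-1)‖ ≤ ‖(1:ℂ)‖ + ‖klu t x m (M'-1)‖ := norm_sub_le _ _
            _ ≤ 1 + (1+G)/2 := by rw [norm_one]; linarith
        linarith
      _ ≤ 2 + 4/δ := by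
        rw [abs_le] at hb1 hb2
        obtain ⟨hb1l, hb1r⟩ := hb1
        obtain ⟨hb2l, hb2r⟩ := hb2
        have h42 : 4/δ = 2*(2/δ) := by ring
        linarith

lemma sum_Ioc_split (f : ℤ → ℂ) (a b c : ℤ) (h1 : a ≤ b) (h2 : b ≤ c) :
    (∑ k ∈ Finset.Ioc a c, f k)
      = (∑ k ∈ Finset.Ioc a b, f k) + (∑ k ∈ Finset.Ioc b c, f k) := by
  rw [← Finset.Ioc_union_Ioc_eq_Ioc h1 h2, Finset.sum_union]
  rw [Finset.disjoint_left]
  intro k hk1 hk2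
  simp only [Finset.mem_Ioc] at hk1 hk2
  omega

lemma card_norm_sum (f : ℤ → ℂ) (hf : ∀ k, ‖f k‖ = 1) (s : Finset ℤ) :
    ‖∑ k ∈ s, f k‖ ≤ (s.card : ℝ) := by
  calc ‖∑ k ∈ s, f k‖ ≤ ∑ k ∈ s, ‖f k‖ := norm_sum_le _ _
    _ = (s.card : ℝ) := by simp [hf]

lemma kernel_bound_pos (N : ℕ) (hN : 1 ≤ N) (t x : ℝ) (ht : 0 < t) (htN : t ≤ 1/N) :
    ‖∑ k ∈ Finset.Icc (-(N:ℤ)) (N:ℤ), klv t x k‖ ≤ 20 / Real.sqrt t := by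
  have hπ := Real.pi_gt_three
  have hN0 : (0:ℝ) < N := by exact_mod_cast hN
  have htN1 : t * N ≤ 1 := by
    rw [le_div_iff₀ hN0] at htN
    linarith
  have hN1 : (1:ℝ) ≤ N := by exact_mod_cast hN
  have ht1 : t ≤ 1 := by nlinarith [mul_le_mul_of_nonneg_left hN1 ht.le]
  set δ : ℝ := Real.sqrt t with hδ
  have hδ0 : 0 < δ := Real.sqrt_pos.mpr ht
  have hδδ : δ * δ = t := Real.mul_self_sqrt ht.le
  have hδ1 : δ ≤ 1 := by
    rw [hδ]
    rw [show (1:ℝ) = Real.sqrt 1 from (Real.sqrt_one).symm]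
    exact Real.sqrt_le_sqrt ht1
  set c : ℝ := t + x with hc
  set m₀ : ℤ := ⌊(2*t*(-(N:ℤ)) + c)/(2*π)⌋ with hm₀
  have h2π : 0 < 2*π := by linarith
  have hm₀l : 2*π*m₀ ≤ 2*t*(-(N:ℤ)) + c := by
    have h := Int.floor_le ((2*t*(-(N:ℤ)) + c)/(2*π))
    rw [← hm₀] at h
    calc 2*π*m₀ = ((m₀:ℝ)) * (2*π) := by ring
      _ ≤ ((2*t*(-(N:ℤ)) + c)/(2*π)) * (2*π) := by
          apply mul_le_mul_of_nonneg_right h (by linarith)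
      _ = 2*t*(-(N:ℤ)) + c := by field_simp
  have hm₀r : 2*t*(-(N:ℤ)) + c < 2*π*m₀ + 2*π := by
    have h := Int.lt_floor_add_one ((2*t*(-(N:ℤ)) + c)/(2*π))
    rw [← hm₀] at h
    have h2 : 2*t*(-(N:ℤ)) + c < ((m₀:ℝ) + 1) * (2*π) := by
      calc 2*t*(-(N:ℤ)) + c = ((2*t*(-(N:ℤ)) + c)/(2*π)) * (2*π) := by field_simp
        _ < ((m₀:ℝ) + 1) * (2*π) := by
            apply mul_lt_mul_of_pos_right h h2π
    linarith [h2]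
  -- thresholds
  set θ1 : ℝ := 2*π*m₀ + δ with hθ1
  set θ2 : ℝ := 2*π*m₀ + 2*π - δ with hθ2
  set θ3 : ℝ := 2*π*m₀ + 2*π + δ with hθ3
  set θ4 : ℝ := 2*π*m₀ + 4*π - δ with hθ4
  set d1 : ℤ := ⌊(θ1 - c)/(2*t)⌋ with hd1
  set d2 : ℤ := ⌊(θ2 - c)/(2*t)⌋ with hd2
  set d3 : ℤ := ⌊(θ3 - c)/(2*t)⌋ with hd3
  set d4 : ℤ := ⌊(θ4 - c)/(2*t)⌋ with hd4
  have ht2 : (0:ℝ) < 2*t := by linarith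
  have hdmono : d1 ≤ d2 ∧ d2 ≤ d3 ∧ d3 ≤ d4 := by
    refine ⟨?_, ?_, ?_⟩ <;>
      [skip; skip; skip] <;>
      apply Int.floor_le_floor <;>
      gcongr <;>
      simp only [hθ1, hθ2, hθ3, hθ4] <;> linarith
  set e1 : ℤ := max (-(N:ℤ)-1) (min (N:ℤ) d1) with he1
  set e2 : ℤ := max (-(N:ℤ)-1) (min (N:ℤ) d2) with he2
  set e3 : ℤ := max (-(N:ℤ)-1) (min (N:ℤ) d3) with he3
  set e4 : ℤ := max (-(N:ℤ)-1) (min (N:ℤ) d4) with he4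
  have hNe : (-(N:ℤ)-1) ≤ e1 ∧ e1 ≤ e2 ∧ e2 ≤ e3 ∧ e3 ≤ e4 ∧ e4 ≤ (N:ℤ) := by
    obtain ⟨a1, a2, a3⟩ := hdmono
    refine ⟨?_, ?_, ?_, ?_, ?_⟩ <;> omega
  -- basic facts about ψ k = 2 t k + c
  have hψle : ∀ (d : ℤ) (θ : ℝ), d = ⌊(θ - c)/(2*t)⌋ → ∀ k : ℤ, k ≤ d → 2*t*k + c ≤ θ := by
    intro d θ hdθ k hk
    have h1 : (k:ℝ) ≤ (θ - c)/(2*t) := by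
      calc (k:ℝ) ≤ (d:ℝ) := by exact_mod_cast hk
        _ ≤ (θ - c)/(2*t) := by rw [hdθ]; exact Int.floor_le _
    have h2 : 2*t*k ≤ θ - c := by
      calc 2*t*(k:ℝ) ≤ 2*t*((θ - c)/(2*t)) := by
            apply mul_le_mul_of_nonneg_left h1 (by linarith)
        _ = θ - c := by field_simp
    linarith
  have hψgt : ∀ (d : ℤ) (θ : ℝ), d = ⌊(θ - c)/(2*t)⌋ → ∀ k : ℤ, d + 1 ≤ k → θ < 2*t*k + c := by
    intro d θ hdθ k hk
    have h1 : (θ - c)/(2*t) < (k:ℝ) := by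
      calc (θ - c)/(2*t) < (d:ℝ) + 1 := by rw [hdθ]; exact Int.lt_floor_add_one _
        _ ≤ (k:ℝ) := by exact_mod_cast hk
    have h2 : θ - c < 2*t*k := by
      calc θ - c = 2*t*((θ - c)/(2*t)) := by field_simp
        _ < 2*t*(k:ℝ) := by apply mul_lt_mul_of_pos_left h1 (by linarith)
    linarith
  -- split the sum
  have hIcc : Finset.Icc (-(N:ℤ)) (N:ℤ) = Finset.Ioc (-(N:ℤ)-1) (N:ℤ) := by
    ext k; simp only [Finset.mem_Icc, Finset.mem_Ioc]; omega
  obtain ⟨b0, b1, b2, b3, b4⟩ := hNe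
  rw [hIcc]
  rw [sum_Ioc_split _ _ e1 _ b0 (by omega)]
  rw [sum_Ioc_split _ e1 e2 _ b1 (by omega)]
  rw [sum_Ioc_split _ e2 e3 _ b2 (by omega)]
  rw [sum_Ioc_split _ e3 e4 _ b3 b4]
  -- bound each piece
  have hS0 : ‖∑ k ∈ Finset.Ioc (-(N:ℤ)-1) e1, klv t x k‖ ≤ δ/(2*t) + 1 := by
    rcases le_or_gt e1 (-(N:ℤ)-1) with h | h
    · rw [Finset.Ioc_eq_empty (by omega), Finset.sum_empty, norm_zero]
      positivity
    · calc ‖∑ k ∈ Finset.Ioc (-(N:ℤ)-1) e1, klv t x k‖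
          ≤ ((Finset.Ioc (-(N:ℤ)-1) e1).card : ℝ) := card_norm_sum _ (klv_norm t x) _
        _ ≤ δ/(2*t) + 1 := by
          rw [Int.card_Ioc]
          have he1d : e1 ≤ d1 := by omega
          have hψ : 2*t*(e1:ℝ) + c ≤ θ1 := hψle d1 θ1 hd1 e1 he1d
          have h2 : 2*t*((e1:ℝ) + (N:ℝ)) ≤ δ := by
            have := hm₀l
            simp only [hθ1] at hψ
            push_cast at this ⊢
            linarith
          have h4 : (e1:ℝ) + (N:ℝ) ≤ δ/(2*t) := by
            rw [le_div_iff₀ ht2]; linarith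
          have h5 : ((e1 - (-(N:ℤ)-1)).toNat : ℤ) = e1 + (N:ℤ) + 1 := by omega
          have h6 : ((e1 - (-(N:ℤ)-1)).toNat : ℝ) = (e1:ℝ) + (N:ℝ) + 1 := by
            exact_mod_cast h5
          rw [h6]
          linarith
  have hS1 : ‖∑ k ∈ Finset.Ioc e1 e2, klv t x k‖ ≤ 2 + 4/δ := by
    rw [show Finset.Ioc e1 e2 = Finset.Icc (e1+1) e2 from by
      ext k; simp only [Finset.mem_Ioc, Finset.mem_Icc]; omega]
    apply kuzmin_landau ht hδ0 hδ1 (e1+1) e2 m₀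
    intro k hk1 hk2
    have hkd1 : d1 + 1 ≤ k := by omega
    have hkd2 : k ≤ d2 := by omega
    constructor
    · have h := hψgt d1 θ1 hd1 k hkd1
      simp only [hθ1, hc] at h
      linarith
    · have h := hψle d2 θ2 hd2 k hkd2
      simp only [hθ2, hc] at h
      linarith
  have hS2 : ‖∑ k ∈ Finset.Ioc e2 e3, klv t x k‖ ≤ δ/t + 1 := by
    rcases le_or_gt e3 e2 with h | h
    · rw [Finset.Ioc_eq_empty (by omega), Finset.sum_empty, norm_zero]
      positivity
    · calc ‖∑ k ∈ Finset.Ioc e2 e3, klv t x k‖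
          ≤ ((Finset.Ioc e2 e3).card : ℝ) := card_norm_sum _ (klv_norm t x) _
        _ ≤ δ/t + 1 := by
          rw [Int.card_Ioc]
          have hd23 : (θ2 - c)/(2*t) - 1 ≤ (d2:ℝ) := by
            rw [hd2]; linarith [Int.lt_floor_add_one ((θ2 - c)/(2*t))]
          have hd3' : (d3:ℝ) ≤ (θ3 - c)/(2*t) := by rw [hd3]; exact Int.floor_le _
          have hee : e3 - e2 ≤ d3 - d2 := by omega
          have heer : (e3:ℝ) - e2 ≤ (d3:ℝ) - d2 := by exact_mod_cast hee
          have hdiv : (θ3 - c)/(2*t) - (θ2 - c)/(2*t) = δ/t := by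
            simp only [hθ2, hθ3]
            field_simp
            ring
          have h5 : ((e3 - e2).toNat : ℤ) = e3 - e2 := by omega
          have h6 : ((e3 - e2).toNat : ℝ) = (e3:ℝ) - e2 := by exact_mod_cast h5
          rw [h6]
          linarith
  have hS3 : ‖∑ k ∈ Finset.Ioc e3 e4, klv t x k‖ ≤ 2 + 4/δ := by
    rw [show Finset.Ioc e3 e4 = Finset.Icc (e3+1) e4 from by
      ext k; simp only [Finset.mem_Ioc, Finset.mem_Icc]; omega]
    apply kuzmin_landau ht hδ0 hδ1 (e3+1) e4 (m₀+1)
    intro k hk1 hk2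
    have hkd3 : d3 + 1 ≤ k := by omega
    have hkd4 : k ≤ d4 := by omega
    constructor
    · have h := hψgt d3 θ3 hd3 k hkd3
      simp only [hθ3, hc] at h
      push_cast
      linarith
    · have h := hψle d4 θ4 hd4 k hkd4
      simp only [hθ4, hc] at h
      push_cast
      linarith
  have hS4 : ‖∑ k ∈ Finset.Ioc e4 (N:ℤ), klv t x k‖ ≤ 1 := by
    have hd4N : (N:ℤ) - 1 ≤ d4 := by
      rw [hd4]
      apply Int.le_floor.mpr
      rw [le_div_iff₀ ht2]
      have hkey : 2*t*(-(N:ℝ)) + c < 2*π*m₀ + 2*π := by push_cast at hm₀r; linarith [hm₀r]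
      have hexp : ((N:ℝ) - 1)*(2*t) = 2*(t*(N:ℝ)) - 2*t := by ring
      have hexp2 : 2*t*(-(N:ℝ)) = -(2*(t*(N:ℝ))) := by ring
      simp only [hθ4]
      push_cast
      linarith
    calc ‖∑ k ∈ Finset.Ioc e4 (N:ℤ), klv t x k‖
        ≤ ((Finset.Ioc e4 (N:ℤ)).card : ℝ) := card_norm_sum _ (klv_norm t x) _
      _ ≤ 1 := by
        rw [Int.card_Ioc]
        have h5 : (((N:ℤ) - e4).toNat : ℤ) ≤ 1 := by omega
        exact_mod_cast h5
  have htotal : ‖((((∑ k ∈ Finset.Ioc (-(N:ℤ)-1) e1, klv t x k)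
        + ∑ k ∈ Finset.Ioc e1 e2, klv t x k)
        + ∑ k ∈ Finset.Ioc e2 e3, klv t x k)
        + ∑ k ∈ Finset.Ioc e3 e4, klv t x k)
        + ∑ k ∈ Finset.Ioc e4 (N:ℤ), klv t x k‖
      ≤ (δ/(2*t) + 1) + (2 + 4/δ) + (δ/t + 1) + (2 + 4/δ) + 1 := by
    calc ‖_ + _‖ ≤ ‖(((∑ k ∈ Finset.Ioc (-(N:ℤ)-1) e1, klv t x k)
          + ∑ k ∈ Finset.Ioc e1 e2, klv t x k)
          + ∑ k ∈ Finset.Ioc e2 e3, klv t x k)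
          + ∑ k ∈ Finset.Ioc e3 e4, klv t x k‖
        + ‖∑ k ∈ Finset.Ioc e4 (N:ℤ), klv t x k‖ := norm_add_le _ _
      _ ≤ (‖((∑ k ∈ Finset.Ioc (-(N:ℤ)-1) e1, klv t x k)
          + ∑ k ∈ Finset.Ioc e1 e2, klv t x k)
          + ∑ k ∈ Finset.Ioc e2 e3, klv t x k‖
        + ‖∑ k ∈ Finset.Ioc e3 e4, klv t x k‖)
        + ‖∑ k ∈ Finset.Ioc e4 (N:ℤ), klv t x k‖ := by
          gcongr
          exact norm_add_le _ _
      _ ≤ ((‖(∑ k ∈ Finset.Ioc (-(N:ℤ)-1) e1, klv t x k)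
          + ∑ k ∈ Finset.Ioc e1 e2, klv t x k‖
        + ‖∑ k ∈ Finset.Ioc e2 e3, klv t x k‖)
        + ‖∑ k ∈ Finset.Ioc e3 e4, klv t x k‖)
        + ‖∑ k ∈ Finset.Ioc e4 (N:ℤ), klv t x k‖ := by
          gcongr
          exact norm_add_le _ _
      _ ≤ (((‖∑ k ∈ Finset.Ioc (-(N:ℤ)-1) e1, klv t x k‖
        + ‖∑ k ∈ Finset.Ioc e1 e2, klv t x k‖)
        + ‖∑ k ∈ Finset.Ioc e2 e3, klv t x k‖)
        + ‖∑ k ∈ Finset.Ioc e3 e4, klv t x k‖)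
        + ‖∑ k ∈ Finset.Ioc e4 (N:ℤ), klv t x k‖ := by
          gcongr
          exact norm_add_le _ _
      _ ≤ (δ/(2*t) + 1) + (2 + 4/δ) + (δ/t + 1) + (2 + 4/δ) + 1 := by
          gcongr <;> first
            | exact hS0 | exact hS1 | exact hS2 | exact hS3 | exact hS4
  have hassoc : (∑ k ∈ Finset.Ioc (-(N:ℤ)-1) e1, klv t x k)
      + ((∑ k ∈ Finset.Ioc e1 e2, klv t x k)
        + ((∑ k ∈ Finset.Ioc e2 e3, klv t x k)
          + ((∑ k ∈ Finset.Ioc e3 e4, klv t x k)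
            + (∑ k ∈ Finset.Ioc e4 (N:ℤ), klv t x k))))
      = ((((∑ k ∈ Finset.Ioc (-(N:ℤ)-1) e1, klv t x k)
        + ∑ k ∈ Finset.Ioc e1 e2, klv t x k)
        + ∑ k ∈ Finset.Ioc e2 e3, klv t x k)
        + ∑ k ∈ Finset.Ioc e3 e4, klv t x k)
        + ∑ k ∈ Finset.Ioc e4 (N:ℤ), klv t x k := by ring
  rw [hassoc]
  refine htotal.trans ?_
  have hu1 : 1 ≤ 1/δ := one_le_one_div hδ0 hδ1
  have he1' : δ/(2*t) = (1/2)*(1/δ) := by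
    rw [← hδδ]; field_simp
  have he2' : δ/t = 1/δ := by
    rw [← hδδ]; field_simp
  have he3' : (4:ℝ)/δ = 4*(1/δ) := by ring
  have he4' : 20/Real.sqrt t = 20*(1/δ) := by rw [← hδ]; ring
  rw [he1', he2', he3', he4']
  linarith

lemma kernel_bound (N : ℕ) (hN : 1 ≤ N) (t x : ℝ) (ht : t ≠ 0) (htN : |t| ≤ 1/N) :
    ‖∑ k ∈ Finset.Icc (-(N:ℤ)) (N:ℤ), klv t x k‖ ≤ 20 / Real.sqrt |t| := by
  rcases ht.lt_or_gt with hneg | hpos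
  · have habs : |t| = -t := abs_of_neg hneg
    have hconj : ∀ k : ℤ, (starRingEnd ℂ) (klv t x k) = klv (-t) (-x) k := by
      intro k
      rw [klv, klv, ← Complex.exp_conj]
      congr 1
      rw [map_mul, Complex.conj_I, Complex.conj_ofReal]
      push_cast
      ring
    calc ‖∑ k ∈ Finset.Icc (-(N:ℤ)) (N:ℤ), klv t x k‖
        = ‖(starRingEnd ℂ) (∑ k ∈ Finset.Icc (-(N:ℤ)) (N:ℤ), klv t x k)‖ :=
          (RCLike.norm_conj _).symm
      _ = ‖∑ k ∈ Finset.Icc (-(N:ℤ)) (N:ℤ), klv (-t) (-x) k‖ := by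
          rw [map_sum]
          congr 1
          exact Finset.sum_congr rfl (fun k _ => hconj k)
      _ ≤ 20 / Real.sqrt (-t) := kernel_bound_pos N hN (-t) (-x) (by linarith)
          (by rw [habs] at htN; exact htN)
      _ = 20 / Real.sqrt |t| := by rw [habs]
  · rw [abs_of_pos hpos] at htN ⊢
    exact kernel_bound_pos N hN t x hpos htN

lemma integral_exp_int (n : ℤ) :
    (∫ y in (0:ℝ)..(2*π), Complex.exp ((n:ℂ) * Complex.I * (y:ℝ)))
      = if n = 0 then (2*π:ℂ) else 0 := by
  split_ifs with h
  · subst h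
    simp only [Int.cast_zero, zero_mul, Complex.exp_zero]
    rw [intervalIntegral.integral_const, Complex.real_smul]
    push_cast
    ring
  · have hc : (n:ℂ) * Complex.I ≠ 0 :=
      mul_ne_zero (Int.cast_ne_zero.mpr h) Complex.I_ne_zero
    rw [integral_exp_mul_complex hc]
    rw [show ((n:ℂ) * Complex.I) * ((2*π:ℝ):ℂ) = (n:ℂ) * (2*(π:ℂ)*Complex.I) from by
      push_cast; ring]
    rw [Complex.exp_int_mul_two_pi_mul_I]
    simp

end TorusDispersion

open TorusDispersion in
/-- Dispersive estimate on the one-dimensional torus for short times `0 < |t| ≤ 1/N`: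
the `L^∞` norm of the Schrödinger evolution of a trigonometric polynomial of degree `N`
is bounded by `C |t|^{-1/2}` times the `L¹(𝕋¹)` norm of the data. -/
theorem torus_short_time_dispersion :
    ∃ C > 0, ∀ N : ℕ, 1 ≤ N → ∀ a : ℤ → ℂ, ∀ t : ℝ, 0 < |t| → |t| ≤ 1 / N →
      ∀ x : ℝ,
        ‖∑ k ∈ Finset.Icc (-(N : ℤ)) (N : ℤ),
            a k * Complex.exp (Complex.I * ((t * (k : ℝ) ^ 2 + (k : ℝ) * x : ℝ) : ℂ))‖ ≤
          C * |t| ^ (-(1 / 2 : ℝ)) *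
            ∫ y in (0 : ℝ)..(2 * Real.pi),
              ‖∑ k ∈ Finset.Icc (-(N : ℤ)) (N : ℤ),
                  a k * Complex.exp (Complex.I * (k : ℂ) * (y : ℂ))‖ := by
  refine ⟨20, by norm_num, ?_⟩
  intro N hN a t ht htN x
  have hπ := Real.pi_gt_three
  have htne : t ≠ 0 := by
    intro h; rw [h, abs_zero] at ht; exact lt_irrefl 0 ht
  -- pointwise factorization of products
  have hpoint : ∀ (j k : ℤ) (y : ℝ),
      Complex.exp (Complex.I * ((t * (k:ℝ)^2 + (k:ℝ)*(x - y) : ℝ) : ℂ))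
          * (a j * Complex.exp (Complex.I * (j:ℂ) * (y:ℂ)))
      = (a j * Complex.exp (Complex.I * ((t * (k:ℝ)^2 + (k:ℝ)*x : ℝ) : ℂ)))
          * Complex.exp (((j - k : ℤ):ℂ) * Complex.I * (y:ℝ)) := by
    intro j k y
    calc Complex.exp (Complex.I * ((t * (k:ℝ)^2 + (k:ℝ)*(x - y) : ℝ) : ℂ))
          * (a j * Complex.exp (Complex.I * (j:ℂ) * (y:ℂ)))
        = a j * Complex.exp (Complex.I * ((t * (k:ℝ)^2 + (k:ℝ)*(x - y) : ℝ) : ℂ)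
            + Complex.I * (j:ℂ) * (y:ℂ)) := by rw [Complex.exp_add]; ring
      _ = a j * Complex.exp (Complex.I * ((t * (k:ℝ)^2 + (k:ℝ)*x : ℝ) : ℂ)
            + ((j - k : ℤ):ℂ) * Complex.I * (y:ℝ)) := by
          congr 1
          push_cast
          ring
      _ = (a j * Complex.exp (Complex.I * ((t * (k:ℝ)^2 + (k:ℝ)*x : ℝ) : ℂ)))
            * Complex.exp (((j - k : ℤ):ℂ) * Complex.I * (y:ℝ)) := by
          rw [Complex.exp_add]; ring
  -- each cross term integrates to an orthogonality relation
  have hterm : ∀ j k : ℤ,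
      (∫ y in (0:ℝ)..(2*π),
        Complex.exp (Complex.I * ((t * (k:ℝ)^2 + (k:ℝ)*(x - y) : ℝ) : ℂ))
          * (a j * Complex.exp (Complex.I * (j:ℂ) * (y:ℂ))))
      = if j = k
          then (2*(π:ℂ)) * (a k * Complex.exp (Complex.I * ((t * (k:ℝ)^2 + (k:ℝ)*x : ℝ) : ℂ)))
          else 0 := by
    intro j k
    simp only [hpoint j k]
    rw [intervalIntegral.integral_const_mul, integral_exp_int (j - k)]
    by_cases hjk : j = k
    · subst hjk
      rw [sub_self, if_pos rfl, if_pos rfl]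
      ring
    · rw [if_neg hjk, if_neg (sub_ne_zero.mpr hjk), mul_zero]
  -- integrability of the cross terms
  have hci : ∀ k j : ℤ, IntervalIntegrable (fun y : ℝ =>
      Complex.exp (Complex.I * ((t * (k:ℝ)^2 + (k:ℝ)*(x - y) : ℝ) : ℂ))
        * (a j * Complex.exp (Complex.I * (j:ℂ) * (y:ℂ)))) MeasureTheory.volume 0 (2*π) := by
    intro k j
    apply Continuous.intervalIntegrable
    fun_prop
  -- the convolution identity
  have hconv :
      (∫ y in (0:ℝ)..(2*π),
        (∑ k ∈ Finset.Icc (-(N:ℤ)) (N:ℤ),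
            Complex.exp (Complex.I * ((t * (k:ℝ)^2 + (k:ℝ)*(x - y) : ℝ) : ℂ)))
          * (∑ j ∈ Finset.Icc (-(N:ℤ)) (N:ℤ), a j * Complex.exp (Complex.I * (j:ℂ) * (y:ℂ))))
      = (2*(π:ℂ)) * ∑ k ∈ Finset.Icc (-(N:ℤ)) (N:ℤ),
          a k * Complex.exp (Complex.I * ((t * (k:ℝ)^2 + (k:ℝ)*x : ℝ) : ℂ)) := by
    have h1 : (∫ y in (0:ℝ)..(2*π),
        (∑ k ∈ Finset.Icc (-(N:ℤ)) (N:ℤ),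
            Complex.exp (Complex.I * ((t * (k:ℝ)^2 + (k:ℝ)*(x - y) : ℝ) : ℂ)))
          * (∑ j ∈ Finset.Icc (-(N:ℤ)) (N:ℤ), a j * Complex.exp (Complex.I * (j:ℂ) * (y:ℂ))))
        = ∫ y in (0:ℝ)..(2*π), ∑ k ∈ Finset.Icc (-(N:ℤ)) (N:ℤ),
            ∑ j ∈ Finset.Icc (-(N:ℤ)) (N:ℤ),
              Complex.exp (Complex.I * ((t * (k:ℝ)^2 + (k:ℝ)*(x - y) : ℝ) : ℂ))
                * (a j * Complex.exp (Complex.I * (j:ℂ) * (y:ℂ))) := by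
      apply intervalIntegral.integral_congr
      intro y _
      simp only [Finset.sum_mul_sum]
    rw [h1]
    have hci2 : ∀ k : ℤ, IntervalIntegrable (fun y : ℝ =>
        ∑ j ∈ Finset.Icc (-(N:ℤ)) (N:ℤ),
          Complex.exp (Complex.I * ((t * (k:ℝ)^2 + (k:ℝ)*(x - y) : ℝ) : ℂ))
            * (a j * Complex.exp (Complex.I * (j:ℂ) * (y:ℂ)))) MeasureTheory.volume 0 (2*π) := by
      intro k
      apply Continuous.intervalIntegrable
      apply continuous_finset_sum
      intro j _
      fun_prop
    rw [intervalIntegral.integral_finset_sum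
      (f := fun (k : ℤ) (y : ℝ) =>
        ∑ j ∈ Finset.Icc (-(N:ℤ)) (N:ℤ),
          Complex.exp (Complex.I * ((t * (k:ℝ)^2 + (k:ℝ)*(x - y) : ℝ) : ℂ))
            * (a j * Complex.exp (Complex.I * (j:ℂ) * (y:ℂ))))
      (fun k _ => hci2 k)]
    have h2 : ∀ k ∈ Finset.Icc (-(N:ℤ)) (N:ℤ),
        (∫ y in (0:ℝ)..(2*π), ∑ j ∈ Finset.Icc (-(N:ℤ)) (N:ℤ),
          Complex.exp (Complex.I * ((t * (k:ℝ)^2 + (k:ℝ)*(x - y) : ℝ) : ℂ))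
            * (a j * Complex.exp (Complex.I * (j:ℂ) * (y:ℂ))))
        = (2*(π:ℂ)) * (a k * Complex.exp (Complex.I * ((t * (k:ℝ)^2 + (k:ℝ)*x : ℝ) : ℂ))) := by
      intro k hk
      rw [intervalIntegral.integral_finset_sum (fun j _ => hci k j)]
      rw [Finset.sum_congr rfl (fun j _ => hterm j k)]
      rw [Finset.sum_ite_eq' (Finset.Icc (-(N:ℤ)) (N:ℤ)) k
        (fun j => (2*(π:ℂ)) * (a k * Complex.exp (Complex.I * ((t * (k:ℝ)^2 + (k:ℝ)*x : ℝ) : ℂ))))]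
      rw [if_pos hk]
    rw [Finset.sum_congr rfl h2, ← Finset.mul_sum]
  -- continuity facts
  have hgc : Continuous (fun y : ℝ => ∑ j ∈ Finset.Icc (-(N:ℤ)) (N:ℤ),
      a j * Complex.exp (Complex.I * (j:ℂ) * (y:ℂ))) := by
    apply continuous_finset_sum
    intro j _
    fun_prop
  have hKc : Continuous (fun y : ℝ => ∑ k ∈ Finset.Icc (-(N:ℤ)) (N:ℤ),
      Complex.exp (Complex.I * ((t * (k:ℝ)^2 + (k:ℝ)*(x - y) : ℝ) : ℂ))) := by
    apply continuous_finset_sum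
    intro k _
    fun_prop
  have h2πpos : (0:ℝ) < 2*π := by linarith
  have hsqrt : 0 < Real.sqrt |t| := Real.sqrt_pos.mpr ht
  have hKb : ∀ y : ℝ, ‖∑ k ∈ Finset.Icc (-(N:ℤ)) (N:ℤ),
      Complex.exp (Complex.I * ((t * (k:ℝ)^2 + (k:ℝ)*(x - y) : ℝ) : ℂ))‖ ≤ 20 / Real.sqrt |t| := by
    intro y
    have h := kernel_bound N hN t (x - y) htne htN
    simp only [klv] at h
    exact h
  have hInn : (0:ℝ) ≤ ∫ y in (0:ℝ)..(2*π), ‖∑ j ∈ Finset.Icc (-(N:ℤ)) (N:ℤ),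
      a j * Complex.exp (Complex.I * (j:ℂ) * (y:ℂ))‖ :=
    intervalIntegral.integral_nonneg (by linarith) (fun y _ => norm_nonneg _)
  -- put everything together
  have hmain : ‖∑ k ∈ Finset.Icc (-(N:ℤ)) (N:ℤ),
        a k * Complex.exp (Complex.I * ((t * (k:ℝ)^2 + (k:ℝ)*x : ℝ) : ℂ))‖
      = (2*π)⁻¹ * ‖∫ y in (0:ℝ)..(2*π),
          (∑ k ∈ Finset.Icc (-(N:ℤ)) (N:ℤ),
              Complex.exp (Complex.I * ((t * (k:ℝ)^2 + (k:ℝ)*(x - y) : ℝ) : ℂ)))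
            * (∑ j ∈ Finset.Icc (-(N:ℤ)) (N:ℤ),
                a j * Complex.exp (Complex.I * (j:ℂ) * (y:ℂ)))‖ := by
    rw [hconv, norm_mul]
    rw [show (2*(π:ℂ)) = ((2*π:ℝ):ℂ) from by push_cast; ring, Complex.norm_real,
      Real.norm_eq_abs, abs_of_pos h2πpos]
    field_simp
  have hbound : ‖∫ y in (0:ℝ)..(2*π),
        (∑ k ∈ Finset.Icc (-(N:ℤ)) (N:ℤ),
            Complex.exp (Complex.I * ((t * (k:ℝ)^2 + (k:ℝ)*(x - y) : ℝ) : ℂ)))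
          * (∑ j ∈ Finset.Icc (-(N:ℤ)) (N:ℤ),
              a j * Complex.exp (Complex.I * (j:ℂ) * (y:ℂ)))‖
      ≤ (20 / Real.sqrt |t|) * ∫ y in (0:ℝ)..(2*π), ‖∑ j ∈ Finset.Icc (-(N:ℤ)) (N:ℤ),
          a j * Complex.exp (Complex.I * (j:ℂ) * (y:ℂ))‖ := by
    calc ‖∫ y in (0:ℝ)..(2*π),
          (∑ k ∈ Finset.Icc (-(N:ℤ)) (N:ℤ),
              Complex.exp (Complex.I * ((t * (k:ℝ)^2 + (k:ℝ)*(x - y) : ℝ) : ℂ)))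
            * (∑ j ∈ Finset.Icc (-(N:ℤ)) (N:ℤ),
                a j * Complex.exp (Complex.I * (j:ℂ) * (y:ℂ)))‖
        ≤ ∫ y in (0:ℝ)..(2*π), ‖(∑ k ∈ Finset.Icc (-(N:ℤ)) (N:ℤ),
              Complex.exp (Complex.I * ((t * (k:ℝ)^2 + (k:ℝ)*(x - y) : ℝ) : ℂ)))
            * (∑ j ∈ Finset.Icc (-(N:ℤ)) (N:ℤ),
                a j * Complex.exp (Complex.I * (j:ℂ) * (y:ℂ)))‖ :=
          intervalIntegral.norm_integral_le_integral_norm (by linarith)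
      _ ≤ ∫ y in (0:ℝ)..(2*π), (20 / Real.sqrt |t|) * ‖∑ j ∈ Finset.Icc (-(N:ℤ)) (N:ℤ),
            a j * Complex.exp (Complex.I * (j:ℂ) * (y:ℂ))‖ := by
          apply intervalIntegral.integral_mono_on (by linarith)
          · exact ((hKc.mul hgc).norm).intervalIntegrable _ _
          · exact (continuous_const.mul hgc.norm).intervalIntegrable _ _
          · intro y hy
            rw [norm_mul]
            exact mul_le_mul_of_nonneg_right (hKb y) (norm_nonneg _)
      _ = (20 / Real.sqrt |t|) * ∫ y in (0:ℝ)..(2*π), ‖∑ j ∈ Finset.Icc (-(N:ℤ)) (N:ℤ),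
            a j * Complex.exp (Complex.I * (j:ℂ) * (y:ℂ))‖ :=
          intervalIntegral.integral_const_mul _ _
  have hrpow : |t| ^ (-(1/2 : ℝ)) = (Real.sqrt |t|)⁻¹ := by
    rw [Real.rpow_neg (abs_nonneg t), ← Real.sqrt_eq_rpow]
  rw [hmain, hrpow]
  calc (2*π)⁻¹ * ‖∫ y in (0:ℝ)..(2*π),
        (∑ k ∈ Finset.Icc (-(N:ℤ)) (N:ℤ),
            Complex.exp (Complex.I * ((t * (k:ℝ)^2 + (k:ℝ)*(x - y) : ℝ) : ℂ)))
          * (∑ j ∈ Finset.Icc (-(N:ℤ)) (N:ℤ),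
              a j * Complex.exp (Complex.I * (j:ℂ) * (y:ℂ)))‖
      ≤ (2*π)⁻¹ * ((20 / Real.sqrt |t|) * ∫ y in (0:ℝ)..(2*π),
          ‖∑ j ∈ Finset.Icc (-(N:ℤ)) (N:ℤ),
            a j * Complex.exp (Complex.I * (j:ℂ) * (y:ℂ))‖) :=
        mul_le_mul_of_nonneg_left hbound (by positivity)
    _ ≤ 20 * (Real.sqrt |t|)⁻¹ * ∫ y in (0:ℝ)..(2*π),
          ‖∑ j ∈ Finset.Icc (-(N:ℤ)) (N:ℤ),
            a j * Complex.exp (Complex.I * (j:ℂ) * (y:ℂ))‖ := by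
        have h1 : (2*π)⁻¹ ≤ 1 := by
          rw [inv_le_one_iff₀]
          right
          linarith
        have h2 : (0:ℝ) ≤ (20 / Real.sqrt |t|) * ∫ y in (0:ℝ)..(2*π),
            ‖∑ j ∈ Finset.Icc (-(N:ℤ)) (N:ℤ),
              a j * Complex.exp (Complex.I * (j:ℂ) * (y:ℂ))‖ := by positivity
        calc (2*π)⁻¹ * ((20 / Real.sqrt |t|) * ∫ y in (0:ℝ)..(2*π),
              ‖∑ j ∈ Finset.Icc (-(N:ℤ)) (N:ℤ),
                a j * Complex.exp (Complex.I * (j:ℂ) * (y:ℂ))‖)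
            ≤ 1 * ((20 / Real.sqrt |t|) * ∫ y in (0:ℝ)..(2*π),
              ‖∑ j ∈ Finset.Icc (-(N:ℤ)) (N:ℤ),
                a j * Complex.exp (Complex.I * (j:ℂ) * (y:ℂ))‖) :=
              mul_le_mul_of_nonneg_right h1 h2
          _ = 20 * (Real.sqrt |t|)⁻¹ * ∫ y in (0:ℝ)..(2*π),
              ‖∑ j ∈ Finset.Icc (-(N:ℤ)) (N:ℤ),
                a j * Complex.exp (Complex.I * (j:ℂ) * (y:ℂ))‖ := by ring
end
end

section
/- For every Schwartz function φ : ℝ → ℂ and every t ≠ 0, the solution u(t, x) := ∫_ℝ e^{-4π² i t ξ²} φ̂(ξ) e^{2πixξ} dξ of the free Schrödinger equation satisfies sup_{x ∈ ℝ} |u(t, x)| ≤ (4π|t|)^{-1/2} ∫_ℝ |φ(y)| dy. -/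
open Real MeasureTheory SchwartzMap
open scoped FourierTransform

/-- The dispersive estimate `‖S(t)φ‖_{L^∞(ℝ)} ≤ (4π|t|)^{-1/2} ‖φ‖_{L¹(ℝ)}` for the free
Schrödinger equation on the line. -/
theorem schrodinger_dispersive_estimate
    (φ : SchwartzMap ℝ ℂ) (t : ℝ) (ht : t ≠ 0) (x : ℝ) :
    ‖∫ ξ : ℝ,
        Complex.exp (-4 * (Real.pi : ℂ) ^ 2 * Complex.I * (t : ℂ) * (ξ : ℂ) ^ 2) *
          (∫ y : ℝ, φ y * Complex.exp (-2 * (Real.pi : ℂ) * Complex.I * (y : ℂ) * (ξ : ℂ))) *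
          Complex.exp (2 * (Real.pi : ℂ) * Complex.I * (x : ℂ) * (ξ : ℂ))‖ ≤
      (4 * Real.pi * |t|) ^ (-(1 / 2 : ℝ)) * ∫ y : ℝ, ‖φ y‖ := by
  set ψ : SchwartzMap ℝ ℂ := SchwartzMap.fourierTransformCLM ℂ φ with hψ
  have hψeq : ∀ ξ : ℝ,
      (∫ y : ℝ, φ y * Complex.exp (-2 * (Real.pi:ℂ) * Complex.I * (y:ℂ) * (ξ:ℂ))) = ψ ξ := by
    intro ξ
    rw [hψ]
    simp only [SchwartzMap.fourierTransformCLM_apply, SchwartzMap.fourier_coe]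
    rw [Real.fourier_real_eq_integral_exp_smul]
    congr 1
    ext y
    rw [smul_eq_mul, mul_comm]
    congr 1
    push_cast [RCLike.inner_apply, conj_trivial]
    ring
  set A : ℂ := 4 * (Real.pi:ℂ)^2 * Complex.I * (t:ℂ) with hA
  have hAeq : A = ((4 * Real.pi^2 * t : ℝ) : ℂ) * Complex.I := by rw [hA]; push_cast; ring
  set F : ℝ → ℂ := fun ε => ∫ ξ : ℝ, Complex.exp (-((ε:ℂ) + A) * (ξ:ℂ)^2) * ψ ξ *
      Complex.exp (2 * (Real.pi:ℂ) * Complex.I * (x:ℂ) * (ξ:ℂ)) with hF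
  -- the goal is about ‖F 0‖
  have hgoal : (∫ ξ : ℝ,
        Complex.exp (-4 * (Real.pi : ℂ) ^ 2 * Complex.I * (t : ℂ) * (ξ : ℂ) ^ 2) *
          (∫ y : ℝ, φ y * Complex.exp (-2 * (Real.pi : ℂ) * Complex.I * (y : ℂ) * (ξ : ℂ))) *
          Complex.exp (2 * (Real.pi : ℂ) * Complex.I * (x : ℂ) * (ξ : ℂ))) = F 0 := by
    rw [hF]
    congr 1
    ext ξ
    rw [hψeq ξ]
    congr 2
    push_cast [hA]
    ring
  rw [hgoal]
  have h1 : ∀ (ε ξ : ℝ), (-((ε:ℂ) + A) * (ξ:ℂ)^2).re = -ε * ξ^2 := by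
    intro ε ξ
    rw [show -((ε:ℂ) + A) * (ξ:ℂ)^2
        = ((-ε * ξ^2 : ℝ) : ℂ) + ((-(4 * Real.pi^2 * t * ξ^2) : ℝ) : ℂ) * Complex.I from by
      rw [hAeq]; push_cast; ring]
    simp only [Complex.add_re, Complex.mul_I_re, Complex.ofReal_re, Complex.ofReal_im,
      neg_zero, add_zero]
  have h3 : ∀ (c ξ : ℝ), ((2 * (c:ℂ)) * (Real.pi:ℂ) * Complex.I * (x:ℂ) * (ξ:ℂ)).re = 0 := by
    intro c ξ
    rw [show (2 * (c:ℂ)) * (Real.pi:ℂ) * Complex.I * (x:ℂ) * (ξ:ℂ)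
        = ((2 * c * Real.pi * x * ξ : ℝ) : ℂ) * Complex.I from by push_cast; ring]
    simp only [Complex.mul_I_re, Complex.ofReal_im, neg_zero]
  have h2 : ∀ (ξ y : ℝ), ((-2 : ℂ) * (Real.pi:ℂ) * Complex.I * (y:ℂ) * (ξ:ℂ)).re = 0 := by
    intro ξ y
    rw [show (-2 : ℂ) * (Real.pi:ℂ) * Complex.I * (y:ℂ) * (ξ:ℂ)
        = ((-2 * Real.pi * y * ξ : ℝ) : ℂ) * Complex.I from by push_cast; ring]
    simp only [Complex.mul_I_re, Complex.ofReal_im, neg_zero]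
  -- norm of the Fubini integrand
  have hnorm : ∀ (ε ξ y : ℝ),
      ‖Complex.exp (-((ε:ℂ) + A) * (ξ:ℂ)^2) *
        (φ y * Complex.exp (-2 * (Real.pi:ℂ) * Complex.I * (y:ℂ) * (ξ:ℂ))) *
        Complex.exp (2 * (Real.pi:ℂ) * Complex.I * (x:ℂ) * (ξ:ℂ))‖
      = Real.exp (-ε * ξ^2) * ‖φ y‖ := by
    intro ε ξ y
    simp only [norm_mul, Complex.norm_exp]
    rw [h1 ε ξ, h2 ξ y, show (2 : ℂ) * (Real.pi:ℂ) * Complex.I * (x:ℂ) * (ξ:ℂ)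
        = (2 * ((1:ℝ):ℂ)) * (Real.pi:ℂ) * Complex.I * (x:ℂ) * (ξ:ℂ) from by norm_num,
      h3 1 ξ, Real.exp_zero]
    ring
  -- key estimate for positive ε
  have key : ∀ ε : ℝ, 0 < ε → ‖F ε‖ ≤ (4 * Real.pi * |t|) ^ (-(1/2:ℝ)) * ∫ y : ℝ, ‖φ y‖ := by
    intro ε hε
    set B : ℂ := (ε:ℂ) + A with hB
    have hBre : B.re = ε := by
      rw [hB, hAeq]
      simp only [Complex.add_re, Complex.ofReal_re, Complex.mul_I_re, Complex.ofReal_im,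
        neg_zero, add_zero]
    have hBim : B.im = 4 * Real.pi^2 * t := by
      rw [hB, hAeq]
      simp only [Complex.add_im, Complex.ofReal_im, Complex.mul_I_im, Complex.ofReal_re,
        zero_add]
    have hBne : B ≠ 0 := by
      intro h
      rw [h, Complex.zero_re] at hBre
      exact hε.ne hBre
    have habsB : 4 * Real.pi^2 * |t| ≤ ‖B‖ := by
      calc 4 * Real.pi^2 * |t| = |B.im| := by rw [hBim, abs_mul]; congr 1; symm; rw [abs_of_pos]; positivity
        _ ≤ ‖B‖ := Complex.abs_im_le_norm B
    -- Fubini integrand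
    set H : ℝ × ℝ → ℂ := fun p => Complex.exp (-B * (p.1:ℂ)^2) *
        (φ p.2 * Complex.exp (-2 * (Real.pi:ℂ) * Complex.I * (p.2:ℂ) * (p.1:ℂ))) *
        Complex.exp (2 * (Real.pi:ℂ) * Complex.I * (x:ℂ) * (p.1:ℂ)) with hH
    have hHcont : Continuous H := by
      rw [hH]
      fun_prop
    have hHint : Integrable H (volume.prod volume) := by
      apply Integrable.mono' ((integrable_exp_neg_mul_sq hε).mul_prod φ.integrable.norm)
        hHcont.aestronglyMeasurable
      refine Filter.Eventually.of_forall fun p => ?_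
      have := hnorm ε p.1 p.2
      rw [← hB] at this
      rw [hH]
      exact le_of_eq this
    -- swap and compute the Gaussian integral
    have hswap : F ε = ∫ y : ℝ, ∫ ξ : ℝ, H (ξ, y) := by
      rw [hF]
      rw [← MeasureTheory.integral_integral_swap (f := fun ξ y => H (ξ, y)) hHint]
      refine congrArg _ (funext fun ξ => ?_)
      rw [← hψeq ξ, hH]
      simp only
      rw [MeasureTheory.integral_mul_const, MeasureTheory.integral_const_mul]
    have hgauss : ∀ y : ℝ, (∫ ξ : ℝ, H (ξ, y)) =
        φ y * (((Real.pi:ℂ) / B) ^ (1/2 : ℂ) *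
          Complex.exp (-(((Real.pi * (x - y))^2 : ℝ) : ℂ) * B⁻¹)) := by
      intro y
      have hre : (-B).re < 0 := by simp [hBre]; exact hε
      have h := integral_cexp_quadratic hre (2 * (Real.pi:ℂ) * Complex.I * ((x:ℂ) - (y:ℂ))) 0
      rw [neg_neg] at h
      have heq : ∀ ξ : ℝ, H (ξ, y) = φ y *
          Complex.exp (-B * (ξ:ℂ)^2 + (2 * (Real.pi:ℂ) * Complex.I * ((x:ℂ) - (y:ℂ))) * (ξ:ℂ) + 0) := by
        intro ξ
        rw [hH]
        simp only
        rw [show -B * (ξ:ℂ)^2 + (2 * (Real.pi:ℂ) * Complex.I * ((x:ℂ) - (y:ℂ))) * (ξ:ℂ) + 0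
            = (-B * (ξ:ℂ)^2) + ((-2 * (Real.pi:ℂ) * Complex.I * (y:ℂ) * (ξ:ℂ))
              + (2 * (Real.pi:ℂ) * Complex.I * (x:ℂ) * (ξ:ℂ))) from by ring,
          Complex.exp_add, Complex.exp_add]
        ring
      simp_rw [heq]
      rw [MeasureTheory.integral_const_mul, h]
      congr 2
      rw [show (2 * (Real.pi:ℂ) * Complex.I * ((x:ℂ) - (y:ℂ)))^2
          = -(4 * (((Real.pi * (x - y))^2 : ℝ) : ℂ)) from by
        rw [show (2 * (Real.pi:ℂ) * Complex.I * ((x:ℂ) - (y:ℂ)))^2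
            = Complex.I^2 * (2 * (Real.pi:ℂ) * ((x:ℂ) - (y:ℂ)))^2 from by ring, Complex.I_sq]
        push_cast
        ring]
      rw [zero_sub, div_eq_mul_inv]
      rw [show ((4:ℂ) * -B)⁻¹ = -(4⁻¹ * B⁻¹) from by field_simp]
      ring
    rw [hswap]
    simp_rw [hgauss]
    set C : ℂ := ((Real.pi:ℂ) / B) ^ (1/2 : ℂ) with hCdef
    have hE : ∀ y : ℝ, ‖Complex.exp (-(((Real.pi * (x - y))^2 : ℝ) : ℂ) * B⁻¹)‖ ≤ 1 := by
      intro y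
      rw [Complex.norm_exp, Real.exp_le_one_iff]
      rw [show -(((Real.pi * (x - y))^2 : ℝ) : ℂ) = ((-(Real.pi * (x - y))^2 : ℝ) : ℂ) from by
        push_cast; ring, Complex.re_ofReal_mul]
      apply mul_nonpos_of_nonpos_of_nonneg
      · simp [neg_nonpos]; positivity
      · rw [Complex.inv_re]
        exact div_nonneg (hBre ▸ hε.le) (Complex.normSq_nonneg B)
    have hC : ‖C‖ ≤ (4 * Real.pi * |t|) ^ (-(1/2:ℝ)) := by
      rw [hCdef, show ((1:ℂ)/2) = (((1:ℝ)/2 : ℝ) : ℂ) from by norm_num,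
        Complex.norm_cpow_of_ne_zero (div_ne_zero (by exact_mod_cast Real.pi_ne_zero) hBne)]
      simp only [Complex.ofReal_re, Complex.ofReal_im, mul_zero, Real.exp_zero, div_one]
      rw [norm_div, Complex.norm_of_nonneg Real.pi_pos.le]
      have h4 : 0 < 4 * Real.pi * |t| := by positivity
      have hle : Real.pi / ‖B‖ ≤ (4 * Real.pi * |t|)⁻¹ := by
        rw [div_le_iff₀ (lt_of_lt_of_le (by positivity) habsB), inv_mul_eq_div,
          le_div_iff₀ h4]
        calc Real.pi * (4 * Real.pi * |t|) = 4 * Real.pi^2 * |t| := by ring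
          _ ≤ ‖B‖ := habsB
      calc (Real.pi / ‖B‖) ^ ((1:ℝ)/2)
          ≤ ((4 * Real.pi * |t|)⁻¹) ^ ((1:ℝ)/2) :=
            Real.rpow_le_rpow (by positivity) hle (by norm_num)
        _ = (4 * Real.pi * |t|) ^ (-(1/2:ℝ)) := by
            rw [Real.inv_rpow h4.le, ← Real.rpow_neg h4.le]
    calc ‖∫ y : ℝ, φ y * (C * Complex.exp (-(((Real.pi * (x - y))^2 : ℝ) : ℂ) * B⁻¹))‖
        ≤ ∫ y : ℝ, ‖φ y * (C * Complex.exp (-(((Real.pi * (x - y))^2 : ℝ) : ℂ) * B⁻¹))‖ :=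
          norm_integral_le_integral_norm _
      _ ≤ ∫ y : ℝ, ‖C‖ * ‖φ y‖ := by
          apply integral_mono_of_nonneg (Filter.Eventually.of_forall fun y => norm_nonneg _)
            (φ.integrable.norm.const_mul ‖C‖)
          refine Filter.Eventually.of_forall fun y => ?_
          show ‖φ y * (C * Complex.exp (-(((Real.pi * (x - y))^2 : ℝ) : ℂ) * B⁻¹))‖ ≤ ‖C‖ * ‖φ y‖
          rw [norm_mul, norm_mul]
          calc ‖φ y‖ * (‖C‖ * ‖Complex.exp (-(((Real.pi * (x - y))^2 : ℝ) : ℂ) * B⁻¹)‖)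
              ≤ ‖φ y‖ * (‖C‖ * 1) := by gcongr; exact hE y
            _ = ‖C‖ * ‖φ y‖ := by ring
      _ = ‖C‖ * ∫ y : ℝ, ‖φ y‖ := MeasureTheory.integral_const_mul _ _
      _ ≤ (4 * Real.pi * |t|) ^ (-(1/2:ℝ)) * ∫ y : ℝ, ‖φ y‖ :=
          mul_le_mul_of_nonneg_right hC (integral_nonneg fun y => norm_nonneg _)
  -- limit as ε → 0⁺
  have hcont : Filter.Tendsto F (nhdsWithin 0 (Set.Ioi 0)) (nhds (F 0)) := by
    rw [hF]
    simp only
    apply MeasureTheory.tendsto_integral_filter_of_dominated_convergence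
      (bound := fun ξ => ‖ψ ξ‖)
    · refine Filter.Eventually.of_forall fun ε => Continuous.aestronglyMeasurable ?_
      fun_prop
    · refine Filter.eventually_of_mem self_mem_nhdsWithin fun ε (hε : ε ∈ Set.Ioi (0:ℝ)) => ?_
      refine Filter.Eventually.of_forall fun ξ => ?_
      have := hnorm ε ξ 0
      simp only [norm_mul, Complex.norm_exp] at *
      rw [h1 ε ξ, show (2 : ℂ) * (Real.pi:ℂ) * Complex.I * (x:ℂ) * (ξ:ℂ)
          = (2 * ((1:ℝ):ℂ)) * (Real.pi:ℂ) * Complex.I * (x:ℂ) * (ξ:ℂ) from by norm_num,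
        h3 1 ξ, Real.exp_zero, mul_one]
      have hexp : Real.exp (-ε * ξ^2) ≤ 1 := by
        rw [Real.exp_le_one_iff]
        have : (0:ℝ) < ε := hε
        nlinarith [sq_nonneg ξ]
      calc Real.exp (-ε * ξ^2) * ‖ψ ξ‖ ≤ 1 * ‖ψ ξ‖ := by
            gcongr
        _ = ‖ψ ξ‖ := one_mul _
    · exact ψ.integrable.norm
    · refine Filter.Eventually.of_forall fun ξ => ?_
      have hc : ContinuousAt (fun ε : ℝ => Complex.exp (-((ε:ℂ) + A) * (ξ:ℂ)^2) * ψ ξ *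
          Complex.exp (2 * (Real.pi:ℂ) * Complex.I * (x:ℂ) * (ξ:ℂ))) 0 := by fun_prop
      exact hc.tendsto.mono_left nhdsWithin_le_nhds
  have hev : ∀ᶠ ε in nhdsWithin 0 (Set.Ioi (0:ℝ)),
      ‖F ε‖ ≤ (4 * Real.pi * |t|) ^ (-(1/2:ℝ)) * ∫ y : ℝ, ‖φ y‖ :=
    Filter.eventually_of_mem self_mem_nhdsWithin fun ε (hε : ε ∈ Set.Ioi (0:ℝ)) => key ε hε
  exact le_of_tendsto hcont.norm hev
end
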